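/- arXiv:2001.05635 — 7 statements merged into one kernel-verified Lean document; each statement's English description precedes it below -/
import Mathlib

section
/- Let f ∈ 𝔽_q[t] be a highly composite polynomial, and let p, p' ∈ 𝔽_q[t] be monic irreducible polynomials with deg p < deg p'. Then the multiplicity of p' in the factorization of f is at most the multiplicity of p in the factorization of f. -/
open Polynomial

/-- The number of monic divisors of a polynomial. -/
noncomputable def tau {Fq : Type} [Field Fq] (f : Fq[X]) : ℕ :=
  {d : Fq[X] | d.Monic ∧ d ∣ f}.ncard

/-- The multiplicity of `p` in the factorization of `f`. -/
noncomputable def mult {Fq : Type} [Field Fq] (p f : Fq[X]) : ℕ :=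
  multiplicity p f

/-- A monic polynomial is highly composite if it maximizes `tau` among monic polynomials of
degree at most its own. -/
def HighlyComposite {Fq : Type} [Field Fq] (f : Fq[X]) : Prop :=
  f.Monic ∧ ∀ g : Fq[X], g.Monic → g.natDegree ≤ f.natDegree → tau g ≤ tau f

noncomputable instance polyUnitsFintype {Fq : Type} [Field Fq] [Fintype Fq] :
    Fintype (Fq[X])ˣ := by
  apply Fintype.ofInjective (fun u : (Fq[X])ˣ => (u : Fq[X]).coeff 0)
  intro u v h
  obtain ⟨r, -, hr⟩ := Polynomial.isUnit_iff.mp u.isUnit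
  obtain ⟨s, -, hs⟩ := Polynomial.isUnit_iff.mp v.isUnit
  apply Units.ext
  simp only [← hr, ← hs, coeff_C_zero] at h
  rw [← hr, ← hs, h]

lemma monicDivisors_finite {Fq : Type} [Field Fq] [Fintype Fq] {f : Fq[X]} (hf : f ≠ 0) :
    {d : Fq[X] | d.Monic ∧ d ∣ f}.Finite := by
  haveI : Fintype {d : Fq[X] // d ∣ f} := UniqueFactorizationMonoid.fintypeSubtypeDvd f hf
  have h1 : ({d : Fq[X] | d ∣ f}).Finite := by
    have h : {d : Fq[X] | d ∣ f} = Set.range (fun x : {d : Fq[X] // d ∣ f} => (x : Fq[X])) := by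
      ext x; simp [Set.mem_range]
    rw [h]
    exact Set.finite_range _
  exact h1.subset fun d hd => hd.2

lemma multiplicity_pow_mul' {α : Type*} [CommMonoidWithZero α] [IsCancelMulZero α] {q x : α} (hq0 : q ≠ 0)
    (hx : ¬ q ∣ x) (n : ℕ) : multiplicity q (q ^ n * x) = n := by
  apply multiplicity_eq_of_dvd_of_not_dvd (dvd_mul_right _ _)
  rw [pow_succ]
  intro hdvd
  exact hx ((mul_dvd_mul_iff_left (pow_ne_zero n hq0)).mp hdvd)

lemma nat_arith (a b dp dp' dm : ℕ) (h1 : a ≤ b) (h2 : dp ≤ dp') :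
    (b - a) * (dp' - dp) + (b * dp + (a * dp' + dm)) = a * dp + (b * dp' + dm) := by
  obtain ⟨c, rfl⟩ := Nat.exists_eq_add_of_le h1
  obtain ⟨d, rfl⟩ := Nat.exists_eq_add_of_le h2
  simp only [Nat.add_sub_cancel_left]
  ring

/-- In a highly composite polynomial, irreducibles of larger degree occur with smaller or
equal multiplicity. -/
theorem multiplicity_antitone_of_highlyComposite {Fq : Type} [Field Fq] [Fintype Fq]
    (f : Fq[X]) (hf : HighlyComposite f) (p p' : Fq[X])
    (hp : p.Monic) (hpirr : Irreducible p) (hp' : p'.Monic) (hp'irr : Irreducible p')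
    (hdeg : p.natDegree < p'.natDegree) :
    mult p' f ≤ mult p f := by
  classical
  by_contra hcon
  push_neg at hcon
  unfold mult at hcon
  obtain ⟨hfm, hmax⟩ := hf
  have hf0 : f ≠ 0 := hfm.ne_zero
  have hpp : Prime p := hpirr.prime
  have hpp' : Prime p' := hp'irr.prime
  have hne : p.natDegree ≠ p'.natDegree := ne_of_lt hdeg
  have hpnd : ¬ p ∣ p' := fun h =>
    hne (by rw [Polynomial.eq_of_monic_of_associated hp hp' (hpirr.associated_of_dvd hp'irr h)])
  have hp'nd : ¬ p' ∣ p := fun h =>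
    hne (by rw [Polynomial.eq_of_monic_of_associated hp hp'
      ((hp'irr.associated_of_dvd hpirr h).symm)])
  set a := multiplicity p f with ha
  set b := multiplicity p' f with hb
  have hfinp : FiniteMultiplicity p f :=
    FiniteMultiplicity.of_not_isUnit hpirr.not_isUnit hf0
  have hfinp' : FiniteMultiplicity p' f :=
    FiniteMultiplicity.of_not_isUnit hp'irr.not_isUnit hf0
  obtain ⟨f1, hf1, hpf1⟩ := hfinp.exists_eq_pow_mul_and_not_dvd
  have hf10 : f1 ≠ 0 := by intro h; rw [h, mul_zero] at hf1; exact hf0 hf1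
  have hfinp'f1 : FiniteMultiplicity p' f1 :=
    FiniteMultiplicity.of_not_isUnit hp'irr.not_isUnit hf10
  have hbf1 : multiplicity p' f1 = b := by
    have hfin2 : FiniteMultiplicity p' (p ^ a * f1) := by rw [← hf1]; exact hfinp'
    have h2 : multiplicity p' (p ^ a * f1) = multiplicity p' (p ^ a) + multiplicity p' f1 :=
      multiplicity_mul hpp' hfin2
    have h3 : multiplicity p' (p ^ a) = 0 :=
      multiplicity_eq_zero.mpr (fun h => hp'nd (hpp'.dvd_of_dvd_pow h))
    rw [← hf1, h3, zero_add] at h2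
    omega
  obtain ⟨m, hm, hp'm⟩ := hfinp'f1.exists_eq_pow_mul_and_not_dvd
  rw [hbf1] at hm
  have hffact : f = p ^ a * (p' ^ b * m) := by rw [hf1, hm]
  have hm0 : m ≠ 0 := by intro h; rw [h, mul_zero] at hm; exact hf10 hm
  have hmf1 : m ∣ f1 := ⟨p' ^ b, by rw [hm, mul_comm]⟩
  have hpm : ¬ p ∣ m := fun h => hpf1 (h.trans hmf1)
  have hmm : m.Monic := by
    have h1 : (p ^ a * (p' ^ b * m)).Monic := hffact ▸ hfm
    exact (hp'.pow _).of_mul_monic_left ((hp.pow _).of_mul_monic_left h1)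
  have hdf : f.natDegree = a * p.natDegree + (b * p'.natDegree + m.natDegree) := by
    rw [hffact, (hp.pow _).natDegree_mul ((hp'.pow _).mul hmm),
      (hp'.pow _).natDegree_mul hmm, natDegree_pow, natDegree_pow]
  -- the competitor polynomial
  have hk1 : 1 ≤ (b - a) * (p'.natDegree - p.natDegree) :=
    Nat.mul_pos (by omega) (by omega)
  set g : Fq[X] := X ^ ((b - a) * (p'.natDegree - p.natDegree)) * (p ^ b * (p' ^ a * m))
    with hgdef
  have hgm : g.Monic := (monic_X_pow _).mul ((hp.pow _).mul ((hp'.pow _).mul hmm))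
  have hgdeg_raw : g.natDegree =
      (b - a) * (p'.natDegree - p.natDegree)
        + (b * p.natDegree + (a * p'.natDegree + m.natDegree)) := by
    rw [hgdef, (monic_X_pow _).natDegree_mul ((hp.pow _).mul ((hp'.pow _).mul hmm)),
      natDegree_X_pow, (hp.pow _).natDegree_mul ((hp'.pow _).mul hmm),
      (hp'.pow _).natDegree_mul hmm, natDegree_pow, natDegree_pow]
  have hgdeg : g.natDegree = f.natDegree := by
    rw [hgdeg_raw, hdf]
    exact nat_arith a b p.natDegree p'.natDegree m.natDegree hcon.le hdeg.le
  -- the injection on monic divisors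
  set φ : Fq[X] → Fq[X] := fun d =>
    p ^ multiplicity p' d *
      (p' ^ multiplicity p d * (d / (p ^ multiplicity p d * p' ^ multiplicity p' d))) with hφdef
  have quot : ∀ (x y : Fq[X]) (u v : ℕ), x = p ^ u * (p' ^ v * y) →
      x / (p ^ u * p' ^ v) = y := by
    intro x y u v hx
    rw [hx, ← mul_assoc]
    exact mul_div_cancel_left₀ y
      (mul_ne_zero (pow_ne_zero _ hpp.ne_zero) (pow_ne_zero _ hpp'.ne_zero))
  have key : ∀ d : Fq[X], d.Monic → d ∣ f → ∃ e : Fq[X], e ∣ m ∧ e.Monic ∧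
      ¬ p ∣ e ∧ ¬ p' ∣ e ∧
      d = p ^ multiplicity p d * (p' ^ multiplicity p' d * e) ∧
      φ d = p ^ multiplicity p' d * (p' ^ multiplicity p d * e) ∧
      multiplicity p d ≤ a ∧ multiplicity p' d ≤ b := by
    intro d hdm hdf'
    have hd0 : d ≠ 0 := hdm.ne_zero
    have hfin1 : FiniteMultiplicity p d :=
      FiniteMultiplicity.of_not_isUnit hpirr.not_isUnit hd0
    have hfin2 : FiniteMultiplicity p' d :=
      FiniteMultiplicity.of_not_isUnit hp'irr.not_isUnit hd0
    obtain ⟨c, hc, hpc⟩ := hfin1.exists_eq_pow_mul_and_not_dvd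
    have hc0 : c ≠ 0 := by intro h; rw [h, mul_zero] at hc; exact hd0 hc
    have hfin3 : FiniteMultiplicity p' c :=
      FiniteMultiplicity.of_not_isUnit hp'irr.not_isUnit hc0
    have hmulc : multiplicity p' c = multiplicity p' d := by
      have hfin2' : FiniteMultiplicity p' (p ^ multiplicity p d * c) := by
        rw [← hc]; exact hfin2
      have h2 := multiplicity_mul hpp' hfin2'
      have h3 : multiplicity p' (p ^ multiplicity p d) = 0 :=
        multiplicity_eq_zero.mpr (fun h => hp'nd (hpp'.dvd_of_dvd_pow h))
      rw [← hc, h3, zero_add] at h2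
      omega
    obtain ⟨e, he, hp'e⟩ := hfin3.exists_eq_pow_mul_and_not_dvd
    rw [hmulc] at he
    have hd_eq : d = p ^ multiplicity p d * (p' ^ multiplicity p' d * e) := by
      conv_lhs => rw [hc, he]
    have hec : e ∣ c := ⟨p' ^ multiplicity p' d, by rw [he, mul_comm]⟩
    have hpe : ¬ p ∣ e := fun h => hpc (h.trans hec)
    have hdm' : (p ^ multiplicity p d * (p' ^ multiplicity p' d * e)).Monic := by
      rw [← hd_eq]; exact hdm
    have hem : e.Monic :=
      (hp'.pow _).of_mul_monic_left ((hp.pow _).of_mul_monic_left hdm')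
    have hed : e ∣ d := by
      conv_rhs => rw [hd_eq]
      exact (dvd_mul_left e (p' ^ multiplicity p' d)).mul_left _
    have hedvd_f : e ∣ f := hed.trans hdf'
    have hcop1 : IsCoprime e (p ^ a) := ((hpirr.coprime_iff_not_dvd.mpr hpe).symm).pow_right
    have hcop2 : IsCoprime e (p' ^ b) := ((hp'irr.coprime_iff_not_dvd.mpr hp'e).symm).pow_right
    have hem' : e ∣ m := by
      have h1 : e ∣ p ^ a * (p' ^ b * m) := by rw [← hffact]; exact hedvd_f
      exact hcop2.dvd_of_dvd_mul_left (hcop1.dvd_of_dvd_mul_left h1)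
    have hquot := quot d e _ _ hd_eq
    have hφd : φ d = p ^ multiplicity p' d * (p' ^ multiplicity p d * e) := by
      show p ^ multiplicity p' d *
          (p' ^ multiplicity p d * (d / (p ^ multiplicity p d * p' ^ multiplicity p' d))) = _
      rw [hquot]
    have hia : multiplicity p d ≤ a :=
      hfinp.le_multiplicity_of_pow_dvd ((pow_multiplicity_dvd p d).trans hdf')
    have hjb : multiplicity p' d ≤ b :=
      hfinp'.le_multiplicity_of_pow_dvd ((pow_multiplicity_dvd p' d).trans hdf')
    exact ⟨e, hem', hem, hpe, hp'e, hd_eq, hφd, hia, hjb⟩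
  -- φ maps monic divisors of f to monic divisors of g
  have hmapsto : ∀ d ∈ {d : Fq[X] | d.Monic ∧ d ∣ f}, φ d ∈ {d : Fq[X] | d.Monic ∧ d ∣ g} := by
    intro d hd
    obtain ⟨e, hem', hemon, -, -, -, hφd, hia, hjb⟩ := key d hd.1 hd.2
    constructor
    · rw [hφd]; exact (hp.pow _).mul ((hp'.pow _).mul hemon)
    · rw [hφd, hgdef]
      exact Dvd.dvd.mul_left
        (mul_dvd_mul (pow_dvd_pow p hjb) (mul_dvd_mul (pow_dvd_pow p' hia) hem')) _
  -- φ is injective on monic divisors of f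
  have hinj : Set.InjOn φ {d : Fq[X] | d.Monic ∧ d ∣ f} := by
    intro d1 hd1 d2 hd2 heq
    obtain ⟨e1, -, -, hpe1, hp'e1, hde1, hφ1, -, -⟩ := key d1 hd1.1 hd1.2
    obtain ⟨e2, -, -, hpe2, hp'e2, hde2, hφ2, -, -⟩ := key d2 hd2.1 hd2.2
    rw [hφ1, hφ2] at heq
    have hnd1 : ¬ p ∣ p' ^ multiplicity p d1 * e1 := by
      intro h; rcases hpp.dvd_mul.mp h with h | h
      exacts [hpnd (hpp.dvd_of_dvd_pow h), hpe1 h]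
    have hnd2 : ¬ p ∣ p' ^ multiplicity p d2 * e2 := by
      intro h; rcases hpp.dvd_mul.mp h with h | h
      exacts [hpnd (hpp.dvd_of_dvd_pow h), hpe2 h]
    have hj : multiplicity p' d1 = multiplicity p' d2 := by
      have h := congrArg (multiplicity p) heq
      rwa [multiplicity_pow_mul' hpp.ne_zero hnd1, multiplicity_pow_mul' hpp.ne_zero hnd2] at h
    have heq' : p' ^ multiplicity p d1 * (p ^ multiplicity p' d1 * e1) =
        p' ^ multiplicity p d2 * (p ^ multiplicity p' d2 * e2) := by
      linear_combination heq
    have hnd1' : ¬ p' ∣ p ^ multiplicity p' d1 * e1 := by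
      intro h; rcases hpp'.dvd_mul.mp h with h | h
      exacts [hp'nd (hpp'.dvd_of_dvd_pow h), hp'e1 h]
    have hnd2' : ¬ p' ∣ p ^ multiplicity p' d2 * e2 := by
      intro h; rcases hpp'.dvd_mul.mp h with h | h
      exacts [hp'nd (hpp'.dvd_of_dvd_pow h), hp'e2 h]
    have hi : multiplicity p d1 = multiplicity p d2 := by
      have h := congrArg (multiplicity p') heq'
      rwa [multiplicity_pow_mul' hpp'.ne_zero hnd1',
        multiplicity_pow_mul' hpp'.ne_zero hnd2'] at h
    rw [hi, hj] at heq
    have he12 : e1 = e2 :=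
      mul_left_cancel₀ (pow_ne_zero _ hpp'.ne_zero)
        (mul_left_cancel₀ (pow_ne_zero _ hpp.ne_zero) heq)
    rw [hde1, hde2, hi, hj, he12]
  -- every image has degree strictly below that of g
  have hdegφ : ∀ d ∈ {d : Fq[X] | d.Monic ∧ d ∣ f}, (φ d).natDegree < g.natDegree := by
    intro d hd
    obtain ⟨e, hem', hemon, -, -, -, hφd, hia, hjb⟩ := key d hd.1 hd.2
    have hdegeq : (φ d).natDegree =
        multiplicity p' d * p.natDegree + (multiplicity p d * p'.natDegree + e.natDegree) := by
      rw [hφd, (hp.pow _).natDegree_mul ((hp'.pow _).mul hemon),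
        (hp'.pow _).natDegree_mul hemon, natDegree_pow, natDegree_pow]
    have h1 : multiplicity p' d * p.natDegree ≤ b * p.natDegree :=
      Nat.mul_le_mul_right _ hjb
    have h2 : multiplicity p d * p'.natDegree ≤ a * p'.natDegree :=
      Nat.mul_le_mul_right _ hia
    have h3 : e.natDegree ≤ m.natDegree := Polynomial.natDegree_le_of_dvd hem' hm0
    omega
  -- conclude
  have hgT : g ∈ {d : Fq[X] | d.Monic ∧ d ∣ g} := ⟨hgm, dvd_rfl⟩
  have hgnotin : g ∉ φ '' {d : Fq[X] | d.Monic ∧ d ∣ f} := by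
    rintro ⟨d, hd, hdg⟩
    have := hdegφ d hd
    rw [hdg] at this
    omega
  have himg : φ '' {d : Fq[X] | d.Monic ∧ d ∣ f} ⊆ {d : Fq[X] | d.Monic ∧ d ∣ g} := by
    rintro x ⟨d, hd, rfl⟩
    exact hmapsto d hd
  have hssub : φ '' {d : Fq[X] | d.Monic ∧ d ∣ f} ⊂ {d : Fq[X] | d.Monic ∧ d ∣ g} :=
    (Set.ssubset_iff_of_subset himg).mpr ⟨g, hgT, hgnotin⟩
  have hlt : tau f < tau g := by
    unfold tau
    calc {d : Fq[X] | d.Monic ∧ d ∣ f}.ncard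
        = (φ '' {d : Fq[X] | d.Monic ∧ d ∣ f}).ncard := (Set.ncard_image_of_injOn hinj).symm
      _ < {d : Fq[X] | d.Monic ∧ d ∣ g}.ncard :=
          Set.ncard_lt_ncard hssub (monicDivisors_finite hgm.ne_zero)
  exact absurd (hmax g hgm hgdeg.le) (not_le.mpr hlt)
end

section
/- Let q ≥ 2 be an integer and let s, r, S, R be positive integers with s·log q / log(1 + 1/r) = S·log q / log(1 + 1/R). Then s = S and r = R. In other words, each element of the set S_q = { s·log q / log(1 + 1/r) : s, r positive integers } has a unique representation of this form. -/
/-- Auxiliary: the two power equalities are impossible with `s < S`. -/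
lemma S_rep_aux (s r S R : ℕ) (hs : 0 < s) (hr : 0 < r) (hR : 0 < R)
    (h1 : R ^ s = r ^ S) (h2 : (R + 1) ^ s = (r + 1) ^ S) (hlt : s < S) : False := by
  rcases eq_or_lt_of_le (show 1 ≤ r from hr) with h1r | h2r
  · -- r = 1
    have hr1 : r = 1 := h1r.symm
    subst hr1
    have hRone : R = 1 := by
      have h1' : R ^ s = 1 := by simpa using h1
      exact (pow_eq_one_iff.mp h1').resolve_right hs.ne'
    subst hRone
    have : s = S := Nat.pow_right_injective le_rfl (by simpa using h2)
    omega
  · -- r ≥ 2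
    have hr2 : 2 ≤ r := h2r
    have hRr : r < R := by
      by_contra hle
      push_neg at hle
      have hpow : R ^ s ≤ r ^ s := Nat.pow_le_pow_left hle s
      have : r ^ s < r ^ S := Nat.pow_lt_pow_right hr2 hlt
      omega
    -- real contradiction
    have hrpos : (0:ℝ) < r := by exact_mod_cast hr
    have hRpos : (0:ℝ) < R := by exact_mod_cast hR
    have e1 : ((R:ℝ)) ^ s = (r:ℝ) ^ S := by exact_mod_cast h1
    have e2 : ((R:ℝ) + 1) ^ s = ((r:ℝ) + 1) ^ S := by exact_mod_cast h2
    have key : (1 + 1 / (R:ℝ)) ^ s = (1 + 1 / (r:ℝ)) ^ S := by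
      have hx : (1 + 1 / (R:ℝ)) = ((R:ℝ) + 1) / R := by field_simp
      have hy : (1 + 1 / (r:ℝ)) = ((r:ℝ) + 1) / r := by field_simp
      rw [hx, hy, div_pow, div_pow, e1, e2]
    have hyx : (1 + 1 / (R:ℝ)) < 1 + 1 / (r:ℝ) := by
      have : (1:ℝ) / R < 1 / r := by
        apply one_div_lt_one_div_of_lt hrpos
        exact_mod_cast hRr
      linarith
    have hy0 : (0:ℝ) ≤ 1 + 1 / (R:ℝ)  := by positivity
    have hx1 : (1:ℝ) < 1 + 1 / (r:ℝ) := by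
      have : (0:ℝ) < 1 / r := by positivity
      linarith
    have ineq1 : (1 + 1 / (R:ℝ)) ^ s < (1 + 1 / (r:ℝ)) ^ s :=
      pow_lt_pow_left₀ hyx hy0 hs.ne'
    have ineq2 : (1 + 1 / (r:ℝ)) ^ s < (1 + 1 / (r:ℝ)) ^ S :=
      pow_lt_pow_right₀ hx1 hlt
    linarith [key, ineq1, ineq2]

/-- Each element of `S_q = { s log q / log(1 + 1/r) : s, r ≥ 1 }` has a unique
representation of this form. -/
theorem S_representation_unique (q : ℕ) (hq : 2 ≤ q) (s r S R : ℕ)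
    (hs : 0 < s) (hr : 0 < r) (hS : 0 < S) (hR : 0 < R)
    (h : (s : ℝ) * Real.log q / Real.log (1 + 1 / (r : ℝ)) =
      (S : ℝ) * Real.log q / Real.log (1 + 1 / (R : ℝ))) :
    s = S ∧ r = R := by
  have hrpos : (0:ℝ) < r := by exact_mod_cast hr
  have hRpos : (0:ℝ) < R := by exact_mod_cast hR
  have hxr : (1:ℝ) < 1 + 1 / (r:ℝ) := by
    have : (0:ℝ) < 1 / r := by positivity
    linarith
  have hxR : (1:ℝ) < 1 + 1 / (R:ℝ) := by
    have : (0:ℝ) < 1 / R := by positivity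
    linarith
  have hlr : 0 < Real.log (1 + 1 / (r:ℝ)) := Real.log_pos hxr
  have hlR : 0 < Real.log (1 + 1 / (R:ℝ)) := Real.log_pos hxR
  have hlq : 0 < Real.log q := Real.log_pos (by exact_mod_cast hq.trans_lt' one_lt_two)
  -- cross-multiplied log equality
  have hcm : (s:ℝ) * Real.log (1 + 1 / (R:ℝ)) = (S:ℝ) * Real.log (1 + 1 / (r:ℝ)) := by
    have hcross := (div_eq_div_iff hlr.ne' hlR.ne').mp h
    exact mul_left_cancel₀ hlq.ne' (by linear_combination hcross)
  -- exponentiate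
  have hexp : (1 + 1 / (R:ℝ)) ^ s = (1 + 1 / (r:ℝ)) ^ S := by
    have hlog : Real.log ((1 + 1 / (R:ℝ)) ^ s) = Real.log ((1 + 1 / (r:ℝ)) ^ S) := by
      rw [Real.log_pow, Real.log_pow]; exact_mod_cast hcm
    have hp1 : (0:ℝ) < (1 + 1 / (R:ℝ)) ^ s := by positivity
    have hp2 : (0:ℝ) < (1 + 1 / (r:ℝ)) ^ S := by positivity
    calc (1 + 1 / (R:ℝ)) ^ s = Real.exp (Real.log ((1 + 1 / (R:ℝ)) ^ s)) := (Real.exp_log hp1).symm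
      _ = Real.exp (Real.log ((1 + 1 / (r:ℝ)) ^ S)) := by rw [hlog]
      _ = (1 + 1 / (r:ℝ)) ^ S := Real.exp_log hp2
  -- natural-number identity
  have hnat : (R + 1) ^ s * r ^ S = (r + 1) ^ S * R ^ s := by
    have hx : (1 + 1 / (R:ℝ)) = ((R:ℝ) + 1) / R := by field_simp
    have hy : (1 + 1 / (r:ℝ)) = ((r:ℝ) + 1) / r := by field_simp
    rw [hx, hy, div_pow, div_pow, div_eq_div_iff (by positivity) (by positivity)] at hexp
    exact_mod_cast hexp
  -- coprimality splitting
  have hcR : Nat.Coprime R (R + 1) := Nat.coprime_self_add_left.mpr (Nat.coprime_one_left R) |>.symm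
  have hcr : Nat.Coprime r (r + 1) := Nat.coprime_self_add_left.mpr (Nat.coprime_one_left r) |>.symm
  have hd1 : R ^ s ∣ r ^ S := by
    have hdvd : R ^ s ∣ (R + 1) ^ s * r ^ S := ⟨(r + 1) ^ S, by rw [hnat, Nat.mul_comm]⟩
    exact (hcR.pow s s).dvd_of_dvd_mul_right (by rwa [Nat.mul_comm] at hdvd)
  have hd2 : r ^ S ∣ R ^ s := by
    have hdvd : r ^ S ∣ (R + 1) ^ s * r ^ S := Dvd.intro_left _ rfl
    rw [hnat] at hdvd
    exact (hcr.pow S S).dvd_of_dvd_mul_right (by rwa [Nat.mul_comm] at hdvd)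
  have h1 : R ^ s = r ^ S := Nat.dvd_antisymm hd1 hd2
  have h2 : (R + 1) ^ s = (r + 1) ^ S := by
    have hrS : 0 < r ^ S := Nat.pow_pos hr
    have := hnat
    rw [h1] at this
    exact Nat.eq_of_mul_eq_mul_right hrS (by linarith [this])
  rcases lt_trichotomy s S with hlt | heq | hgt
  · exact absurd (S_rep_aux s r S R hs hr hR h1 h2 hlt) (fun x => x)
  · subst heq
    refine ⟨rfl, ?_⟩
    exact (Nat.pow_left_injective hs.ne' h1.symm)
  · exact absurd (S_rep_aux S R s r hS hR hr h1.symm h2.symm hgt) (fun x => x)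
end

section
/- For every x > 0, the function f ↦ τ(f)·q^{−deg f/x} attains its maximum over all monic polynomials f ∈ 𝔽_q[t]; that is, there exists a monic h ∈ 𝔽_q[t] with τ(h)·q^{−deg h/x} ≥ τ(f)·q^{−deg f/x} for all monic f ∈ 𝔽_q[t]. -/
open Polynomial

namespace TauMaxAux

open UniqueFactorizationMonoid

variable {Fq : Type} [Field Fq] [DecidableEq Fq]

lemma monic_of_normalized_factor {f p : Fq[X]} (hp : p ∈ normalizedFactors f) : p.Monic := by
  have h1 := normalize_normalized_factor p hp
  have h2 : p ≠ 0 := (irreducible_of_normalized_factor p hp).ne_zero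
  rw [← h1]
  exact monic_normalize h2

lemma prod_normalizedFactors_eq {d : Fq[X]} (hd : d.Monic) :
    (normalizedFactors d).prod = d := by
  refine eq_of_monic_of_associated ?_ hd (prod_normalizedFactors hd.ne_zero)
  have := monic_multiset_prod_of_monic (normalizedFactors d) id
    (fun p hp => monic_of_normalized_factor hp)
  simpa using this

lemma sum_natDegree_eq {d : Fq[X]} (hd : d.Monic) :
    ((normalizedFactors d).map natDegree).sum = d.natDegree := by
  conv_rhs => rw [← prod_normalizedFactors_eq hd]
  refine (natDegree_multiset_prod _ ?_).symm
  intro h0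
  exact (irreducible_of_normalized_factor 0 h0).ne_zero rfl

lemma finite_le_multiset {α : Type*} [DecidableEq α] (T : Multiset α) :
    Finite {A : Multiset α // A ≤ T} := by
  refine Finite.of_injective
    (fun A => (⟨A.1, by simp [Multiset.mem_toFinset, Multiset.mem_powerset, A.2]⟩ :
      {L // L ∈ T.powerset.toFinset})) ?_
  intro A B h
  simp only [Subtype.mk.injEq] at h
  exact Subtype.ext h

lemma card_le_multiset_le {α : Type*} [DecidableEq α] (T : Multiset α) :
    Nat.card {A : Multiset α // A ≤ T} ≤ 2 ^ Multiset.card T := by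
  have hinj : Function.Injective
      (fun A : {A : Multiset α // A ≤ T} =>
        (⟨A.1, by simp [Multiset.mem_toFinset, Multiset.mem_powerset, A.2]⟩ :
          {L // L ∈ T.powerset.toFinset})) := by
    intro A B h
    simp only [Subtype.mk.injEq] at h
    exact Subtype.ext h
  calc Nat.card {A : Multiset α // A ≤ T}
      ≤ Nat.card {L // L ∈ T.powerset.toFinset} := Nat.card_le_card_of_injective _ hinj
    _ = T.powerset.toFinset.card := by
        rw [Nat.card_eq_fintype_card, Fintype.card_coe]
    _ ≤ Multiset.card T.powerset := Multiset.toFinset_card_le _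
    _ = 2 ^ Multiset.card T := Multiset.card_powerset T

lemma finite_monic_lt [Fintype Fq] (k : ℕ) :
    {p : Fq[X] | p.Monic ∧ p.natDegree < k}.Finite := by
  apply Set.Finite.of_finite_image (f := fun p => fun i : Fin k => p.coeff i)
    (Set.toFinite _)
  intro p hp q hq h
  ext n
  by_cases hn : n < k
  · exact congrFun h ⟨n, hn⟩
  · rw [coeff_eq_zero_of_natDegree_lt (lt_of_lt_of_le hp.2 (not_lt.1 hn)),
      coeff_eq_zero_of_natDegree_lt (lt_of_lt_of_le hq.2 (not_lt.1 hn))]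

lemma tau_bound [Fintype Fq] (k : ℕ) {f : Fq[X]} (hf : f.Monic) :
    ∃ m : ℕ, k * m ≤ f.natDegree ∧
      tau f ≤ (f.natDegree + 1) ^ ({p : Fq[X] | p.Monic ∧ p.natDegree < k}.ncard) * 2 ^ m := by
  classical
  set n := f.natDegree with hn
  set M := normalizedFactors f with hM
  set Ms := M.filter (fun p => p.natDegree < k) with hMs
  set Ml := M.filter (fun p => ¬ p.natDegree < k) with hMl
  set P := {p : Fq[X] | p.Monic ∧ p.natDegree < k} with hP
  have hsum : (M.map natDegree).sum = n := sum_natDegree_eq hf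
  have hMcard : Multiset.card M ≤ n := by
    have h1 : ∀ d ∈ M.map natDegree, 1 ≤ d := by
      intro d hd
      obtain ⟨p, hp, rfl⟩ := Multiset.mem_map.1 hd
      exact (irreducible_of_normalized_factor p hp).natDegree_pos
    have := Multiset.card_nsmul_le_sum h1
    simpa [hsum] using this
  refine ⟨Multiset.card Ml, ?_, ?_⟩
  · -- k * card Ml ≤ n
    have h1 : ∀ d ∈ Ml.map natDegree, k ≤ d := by
      intro d hd
      obtain ⟨p, hp, rfl⟩ := Multiset.mem_map.1 hd
      exact not_lt.1 (Multiset.mem_filter.1 hp).2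
    have h2 := Multiset.card_nsmul_le_sum h1
    have h3 : (Ml.map natDegree).sum ≤ (M.map natDegree).sum := by
      obtain ⟨u, hu⟩ := Multiset.le_iff_exists_add.1 (Multiset.filter_le (fun p => ¬ p.natDegree < k) M)
      rw [← hMl] at hu
      rw [hu, Multiset.map_add, Multiset.sum_add]
      exact Nat.le_add_right _ _
    calc k * Multiset.card Ml = Multiset.card (Ml.map natDegree) • k := by
          rw [Multiset.card_map, smul_eq_mul, mul_comm]
      _ ≤ (Ml.map natDegree).sum := h2
      _ ≤ (M.map natDegree).sum := h3
      _ = n := hsum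
  · -- counting
    haveI : Finite ↥P := (finite_monic_lt k).to_subtype
    haveI := finite_le_multiset Ms
    haveI := finite_le_multiset Ml
    have hτ : tau f = Nat.card {d : Fq[X] // d.Monic ∧ d ∣ f} := by
      rw [tau, ← Nat.card_coe_set_eq]
      rfl
    have hNF : ∀ d : Fq[X], d.Monic → d ∣ f → normalizedFactors d ≤ M := fun d hd hdvd =>
      (dvd_iff_normalizedFactors_le_normalizedFactors hd.ne_zero hf.ne_zero).1 hdvd
    -- injection into pairs
    have step1 : Nat.card {d : Fq[X] // d.Monic ∧ d ∣ f} ≤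
        Nat.card ({A : Multiset Fq[X] // A ≤ Ms} × {B : Multiset Fq[X] // B ≤ Ml}) := by
      refine Nat.card_le_card_of_injective
        (fun d => (⟨(normalizedFactors d.1).filter (fun p => p.natDegree < k),
            Multiset.filter_le_filter _ (hNF d.1 d.2.1 d.2.2)⟩,
          ⟨(normalizedFactors d.1).filter (fun p => ¬ p.natDegree < k),
            Multiset.filter_le_filter _ (hNF d.1 d.2.1 d.2.2)⟩)) ?_
      intro d e h
      have h1 := congrArg (fun z => z.1.1) h
      have h2 := congrArg (fun z => z.2.1) h
      simp only at h1 h2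
      have h3 : normalizedFactors d.1 = normalizedFactors e.1 := by
        rw [← Multiset.filter_add_not (fun p => p.natDegree < k) (normalizedFactors d.1),
          ← Multiset.filter_add_not (fun p => p.natDegree < k) (normalizedFactors e.1), h1, h2]
      have h4 := congrArg Multiset.prod h3
      rw [prod_normalizedFactors_eq d.2.1, prod_normalizedFactors_eq e.2.1] at h4
      exact Subtype.ext h4
    have step3 : Nat.card {A : Multiset Fq[X] // A ≤ Ms} ≤ (n + 1) ^ P.ncard := by
      have hco : ∀ (A : {A : Multiset Fq[X] // A ≤ Ms}) (p : Fq[X]),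
          Multiset.count p A.1 < n + 1 := by
        intro A p
        have := (Multiset.count_le_card p A.1).trans
          ((Multiset.card_le_card A.2).trans
            ((Multiset.card_le_card (Multiset.filter_le _ M)).trans hMcard))
        omega
      have hinj : Function.Injective
          (fun (A : {A : Multiset Fq[X] // A ≤ Ms}) (p : ↥P) =>
            (⟨Multiset.count p.1 A.1, hco A p.1⟩ : Fin (n + 1))) := by
        intro A B h
        apply Subtype.ext
        ext a
        by_cases ha : a ∈ P
        · exact congrArg Fin.val (congrFun h ⟨a, ha⟩)
        · have hmem : ∀ (C : {A : Multiset Fq[X] // A ≤ Ms}), a ∉ C.1 := by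
            intro C hmemC
            have haMs : a ∈ Ms := Multiset.mem_of_le C.2 hmemC
            have haM : a ∈ M := Multiset.mem_of_mem_filter haMs
            exact ha ⟨monic_of_normalized_factor haM, (Multiset.mem_filter.1 haMs).2⟩
          rw [Multiset.count_eq_zero_of_notMem (hmem A),
            Multiset.count_eq_zero_of_notMem (hmem B)]
      calc Nat.card {A : Multiset Fq[X] // A ≤ Ms} ≤ Nat.card (↥P → Fin (n + 1)) :=
            Nat.card_le_card_of_injective _ hinj
        _ = (n + 1) ^ P.ncard := by
            rw [Nat.card_fun, Nat.card_eq_fintype_card, Fintype.card_fin,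
              Nat.card_coe_set_eq]
    have step4 : Nat.card {B : Multiset Fq[X] // B ≤ Ml} ≤ 2 ^ Multiset.card Ml :=
      card_le_multiset_le Ml
    calc tau f = Nat.card {d : Fq[X] // d.Monic ∧ d ∣ f} := hτ
      _ ≤ Nat.card ({A : Multiset Fq[X] // A ≤ Ms} × {B : Multiset Fq[X] // B ≤ Ml}) := step1
      _ = Nat.card {A : Multiset Fq[X] // A ≤ Ms} * Nat.card {B : Multiset Fq[X] // B ≤ Ml} :=
          Nat.card_prod _ _
      _ ≤ (n + 1) ^ P.ncard * 2 ^ Multiset.card Ml := Nat.mul_le_mul step3 step4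

lemma tau_one : tau (1 : Fq[X]) = 1 := by
  have : {d : Fq[X] | d.Monic ∧ d ∣ 1} = {1} := by
    ext d
    simp only [Set.mem_setOf_eq, Set.mem_singleton_iff]
    constructor
    · rintro ⟨hd, hdvd⟩
      exact hd.eq_one_of_isUnit (isUnit_of_dvd_one hdvd)
    · rintro rfl
      exact ⟨monic_one, dvd_refl 1⟩
  rw [tau, this, Set.ncard_singleton]

end TauMaxAux

/-- For every `x > 0`, the function `f ↦ τ(f) q^{-deg f / x}` attains its maximum over all
monic polynomials. -/
theorem exists_max_weighted_tau {Fq : Type} [Field Fq] [Fintype Fq] (x : ℝ) (hx : 0 < x) :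
    ∃ h : Fq[X], h.Monic ∧ ∀ f : Fq[X], f.Monic →
      (tau f : ℝ) * (Fintype.card Fq : ℝ) ^ (-(f.natDegree : ℝ) / x) ≤
      (tau h : ℝ) * (Fintype.card Fq : ℝ) ^ (-(h.natDegree : ℝ) / x) := by
  classical
  set q : ℝ := (Fintype.card Fq : ℝ) with hqdef
  have hq2 : (2 : ℝ) ≤ q := by
    have h2n : 2 ≤ Fintype.card Fq := Fintype.one_lt_card
    rw [hqdef]
    exact_mod_cast h2n
  have hq0 : (0 : ℝ) < q := lt_of_lt_of_le two_pos hq2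
  set k : ℕ := ⌈x⌉₊ + 1 with hkdef
  have hk0 : (0 : ℝ) < k := by positivity
  have hxk : x < (k : ℝ) := by
    calc x ≤ (⌈x⌉₊ : ℝ) := Nat.le_ceil x
      _ < (k : ℝ) := by rw [hkdef]; push_cast; linarith
  set r : ℝ := 2 ^ ((k : ℝ)⁻¹) * q ^ (-(x⁻¹)) with hrdef
  have hr0 : 0 < r := mul_pos (Real.rpow_pos_of_pos two_pos _) (Real.rpow_pos_of_pos hq0 _)
  have hr1 : r < 1 := by
    rw [hrdef, Real.rpow_neg hq0.le, ← div_eq_mul_inv, div_lt_one (Real.rpow_pos_of_pos hq0 _)]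
    rw [Real.rpow_def_of_pos two_pos, Real.rpow_def_of_pos hq0]
    apply Real.exp_lt_exp.2
    have hlog2 : (0 : ℝ) < Real.log 2 := Real.log_pos one_lt_two
    have hlogq : Real.log 2 ≤ Real.log q := Real.log_le_log two_pos hq2
    have h1 : Real.log 2 * (k : ℝ)⁻¹ < Real.log q * x⁻¹ := by
      rw [mul_inv_lt_iff₀ hk0, mul_comm (Real.log q), mul_assoc]
      have hxinv : (0 : ℝ) < x⁻¹ := inv_pos.2 hx
      calc Real.log 2 = Real.log 2 * (x⁻¹ * x) := by
            rw [inv_mul_cancel₀ hx.ne', mul_one]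
        _ = (Real.log 2 * x) * x⁻¹ := by ring
        _ < (Real.log q * k) * x⁻¹ := by
            apply mul_lt_mul_of_pos_right _ hxinv
            calc Real.log 2 * x < Real.log 2 * k := by
                  exact mul_lt_mul_of_pos_left hxk hlog2
              _ ≤ Real.log q * k := by
                  apply mul_le_mul_of_nonneg_right hlogq hk0.le
        _ = x⁻¹ * (Real.log q * k) := by ring
    exact h1
  set P := {p : Fq[X] | p.Monic ∧ p.natDegree < k} with hP
  set c : ℕ := P.ncard with hc
  -- key bound
  have key : ∀ f : Fq[X], f.Monic →
      (tau f : ℝ) * q ^ (-(f.natDegree : ℝ) / x) ≤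
        ((f.natDegree : ℝ) + 1) ^ c * r ^ f.natDegree := by
    intro f hf
    obtain ⟨m, hm, hτ⟩ := TauMaxAux.tau_bound k hf
    set n := f.natDegree with hn
    have hq' : (0 : ℝ) < q ^ (-(n : ℝ) / x) := Real.rpow_pos_of_pos hq0 _
    have hτR : (tau f : ℝ) ≤ ((n : ℝ) + 1) ^ c * 2 ^ m := by
      have := hτ
      calc (tau f : ℝ) ≤ (((n + 1) ^ c * 2 ^ m : ℕ) : ℝ) := by exact_mod_cast hτ
        _ = ((n : ℝ) + 1) ^ c * 2 ^ m := by push_cast; ring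
    calc (tau f : ℝ) * q ^ (-(n : ℝ) / x)
        ≤ (((n : ℝ) + 1) ^ c * 2 ^ m) * q ^ (-(n : ℝ) / x) := by
          apply mul_le_mul_of_nonneg_right hτR hq'.le
      _ = ((n : ℝ) + 1) ^ c * ((2 : ℝ) ^ m * q ^ (-(n : ℝ) / x)) := by ring
      _ ≤ ((n : ℝ) + 1) ^ c * r ^ n := by
          apply mul_le_mul_of_nonneg_left _ (by positivity)
          -- 2^m * q^(-n/x) ≤ r^n
          have e1 : r ^ n = 2 ^ ((n : ℝ) * (k : ℝ)⁻¹) * q ^ (-(n : ℝ) / x) := by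
            rw [hrdef, mul_pow, ← Real.rpow_natCast (2 ^ ((k:ℝ)⁻¹)) n,
              ← Real.rpow_natCast (q ^ (-x⁻¹)) n,
              ← Real.rpow_mul (by norm_num : (0:ℝ) ≤ 2),
              ← Real.rpow_mul hq0.le]
            congr 1
            · congr 1; ring
            · congr 1; ring
          rw [e1]
          apply mul_le_mul_of_nonneg_right _ hq'.le
          rw [← Real.rpow_natCast 2 m]
          apply Real.rpow_le_rpow_of_exponent_le one_le_two
          have hmk : (k : ℝ) * m ≤ n := by exact_mod_cast hm
          rw [mul_comm] at hmk
          calc (m : ℝ) ≤ (n : ℝ) / k := (le_div_iff₀ hk0).2 hmk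
            _ = (n : ℝ) * (k : ℝ)⁻¹ := div_eq_mul_inv _ _
  -- tendsto
  have htend : Filter.Tendsto (fun n : ℕ => ((n : ℝ) + 1) ^ c * r ^ n)
      Filter.atTop (nhds 0) := by
    have h0 := tendsto_pow_const_mul_const_pow_of_lt_one c hr0.le hr1
    have h1 := h0.comp (Filter.tendsto_add_atTop_nat 1)
    have h2 := h1.const_mul (r⁻¹)
    rw [mul_zero] at h2
    apply h2.congr
    intro n
    simp only [Function.comp]
    push_cast
    field_simp
    ring
  obtain ⟨N, hN⟩ := Filter.eventually_atTop.1 (htend.eventually_lt_const one_pos)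
  -- finite set of small-degree monic polynomials
  set F := {p : Fq[X] | p.Monic ∧ p.natDegree < N + 1} with hF
  have hFfin : F.Finite := TauMaxAux.finite_monic_lt (N + 1)
  have h1F : (1 : Fq[X]) ∈ F := ⟨monic_one, by simp⟩
  obtain ⟨h, hhF, hmax⟩ := Set.exists_max_image F
    (fun f => (tau f : ℝ) * q ^ (-(f.natDegree : ℝ) / x)) hFfin ⟨1, h1F⟩
  refine ⟨h, hhF.1, ?_⟩
  intro f hf
  by_cases hdeg : f.natDegree ≤ N
  · exact hmax f ⟨hf, Nat.lt_succ_of_le hdeg⟩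
  · have hval1 : (tau (1 : Fq[X]) : ℝ) * q ^ (-((1:Fq[X]).natDegree : ℝ) / x) = 1 := by
      rw [TauMaxAux.tau_one]
      simp
    have hb := key f hf
    have hsmall : ((f.natDegree : ℝ) + 1) ^ c * r ^ f.natDegree < 1 :=
      hN f.natDegree (le_of_lt (not_le.1 hdeg))
    have h1h : (1 : ℝ) ≤ (tau h : ℝ) * q ^ (-(h.natDegree : ℝ) / x) := by
      have := hmax 1 h1F
      rw [hval1] at this
      exact this
    linarith
end

section
/- Let x > 0 with x ∉ S, where S = { s·log q / log(1 + 1/r) : s, r positive integers }. If a monic polynomial h ∈ 𝔽_q[t] satisfies τ(h)·q^{−deg h/x} ≥ τ(f)·q^{−deg f/x} for all monic f ∈ 𝔽_q[t], then for every monic irreducible p ∈ 𝔽_q[t] the multiplicity of p in h equals ⌊1/(q^{deg p/x} − 1)⌋; in particular the maximizer h is unique. -/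
open Polynomial
open UniqueFactorizationMonoid

/-- The set `S_q = { s log q / log(1 + 1/r) : s, r ≥ 1 }`. -/
def Sset (q : ℕ) : Set ℝ :=
  {x : ℝ | ∃ s r : ℕ, 0 < s ∧ 0 < r ∧ x = (s : ℝ) * Real.log q / Real.log (1 + 1 / (r : ℝ))}

section Aux

variable {Fq : Type} [Field Fq] [DecidableEq Fq]

lemma prod_nf_monic {d : Fq[X]} (hd : d.Monic) :
    (normalizedFactors d).prod = d := by
  have hne : d ≠ 0 := hd.ne_zero
  refine eq_of_monic_of_associated ?_ hd (prod_normalizedFactors hne)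
  have := monic_multiset_prod_of_monic (normalizedFactors d) id (fun a ha => ?_)
  · simpa using this
  · have h1 : normalize a = a := normalize_normalized_factor a ha
    have h2 : a ≠ 0 := (irreducible_of_normalized_factor a ha).ne_zero
    simpa [h1] using monic_normalize (p := a) h2

lemma divisors_finite {f : Fq[X]} (hf : f ≠ 0) :
    {d : Fq[X] | d.Monic ∧ d ∣ f}.Finite := by
  apply Set.Finite.subset
    (((normalizedFactors f).powerset.toFinset.finite_toSet).image Multiset.prod)
  rintro d ⟨hdm, hdvd⟩
  refine ⟨normalizedFactors d, ?_, prod_nf_monic hdm⟩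
  simp only [Finset.mem_coe, Multiset.mem_toFinset, Multiset.mem_powerset]
  exact (dvd_iff_normalizedFactors_le_normalizedFactors hdm.ne_zero hf).mp hdvd

lemma tau_pos {f : Fq[X]} (hf : f ≠ 0) : 0 < tau f :=
  (Set.ncard_pos (divisors_finite hf)).mpr ⟨1, monic_one, one_dvd f⟩

lemma pow_mul_inj {p : Fq[X]} (hp0 : p ≠ 0) {i j : ℕ} {d e : Fq[X]}
    (hd : ¬ p ∣ d) (he : ¬ p ∣ e) (heq : p ^ i * d = p ^ j * e) : i = j ∧ d = e := by
  wlog hij : i ≤ j generalizing i j d e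
  · obtain ⟨h1, h2⟩ := this he hd heq.symm (le_of_not_ge hij)
    exact ⟨h1.symm, h2.symm⟩
  obtain ⟨c, rfl⟩ : ∃ c, j = i + c := ⟨j - i, (Nat.add_sub_cancel' hij).symm⟩
  rw [pow_add, mul_assoc] at heq
  have hde : d = p ^ c * e := mul_left_cancel₀ (pow_ne_zero i hp0) heq
  rcases Nat.eq_zero_or_pos c with hc | hc
  · subst hc; simp only [pow_zero, one_mul] at hde; exact ⟨by simp, hde⟩
  · exact absurd (hde ▸ dvd_mul_of_dvd_left (dvd_pow_self p hc.ne') e) hd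

lemma tau_pow_mul {p g : Fq[X]} (hp : p.Monic) (hirr : Irreducible p)
    (hg : g.Monic) (hpg : ¬ p ∣ g) (k : ℕ) :
    tau (p ^ k * g) = (k + 1) * tau g := by
  have hp0 : p ≠ 0 := hp.ne_zero
  set F : Fin (k + 1) × {d : Fq[X] // d.Monic ∧ d ∣ g} →
      {d : Fq[X] // d.Monic ∧ d ∣ p ^ k * g} :=
    fun z => ⟨p ^ (z.1 : ℕ) * z.2.1,
      (hp.pow _).mul z.2.2.1, mul_dvd_mul (pow_dvd_pow p z.1.is_le) z.2.2.2⟩ with hF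
  have hbij : Function.Bijective F := by
    constructor
    · rintro ⟨i, d, hdm, hdd⟩ ⟨j, e, hem, hed⟩ hfe
      have heq : p ^ (i : ℕ) * d = p ^ (j : ℕ) * e := congrArg Subtype.val hfe
      have hd : ¬ p ∣ d := fun hc => hpg (hc.trans hdd)
      have he : ¬ p ∣ e := fun hc => hpg (hc.trans hed)
      obtain ⟨h1, h2⟩ := pow_mul_inj hp0 hd he heq
      exact Prod.ext (Fin.ext h1) (Subtype.ext h2)
    · rintro ⟨d, hdm, hdd⟩
      have hd0 : d ≠ 0 := hdm.ne_zero
      have hfin : FiniteMultiplicity p d :=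
        FiniteMultiplicity.of_not_isUnit hirr.not_isUnit hd0
      obtain ⟨c, hc, hpc⟩ := hfin.exists_eq_pow_mul_and_not_dvd
      set i := multiplicity p d with hi
      have hcm : c.Monic := (hp.pow i).of_mul_monic_left (hc ▸ hdm)
      have hcd : c ∣ p ^ k * g := (Dvd.intro_left _ hc.symm).trans hdd
      have hcop : IsCoprime c p := (hirr.coprime_iff_not_dvd.mpr hpc).symm
      have hcg : c ∣ g := (hcop.pow_right).dvd_of_dvd_mul_left hcd
      have hik : i ≤ k := by
        by_contra hik
        push_neg at hik
        have h1 : p ^ (k + 1) ∣ p ^ k * g :=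
          (pow_dvd_pow p hik).trans ((Dvd.intro c hc.symm).trans hdd)
        rw [pow_succ, mul_dvd_mul_iff_left (pow_ne_zero k hp0)] at h1
        exact hpg h1
      exact ⟨⟨⟨i, Nat.lt_succ_of_le hik⟩, ⟨c, hcm, hcg⟩⟩, Subtype.ext hc.symm⟩
  calc tau (p ^ k * g)
      = Nat.card {d : Fq[X] // d.Monic ∧ d ∣ p ^ k * g} :=
        (Nat.card_coe_set_eq _).symm
    _ = Nat.card (Fin (k + 1) × {d : Fq[X] // d.Monic ∧ d ∣ g}) :=
        (Nat.card_eq_of_bijective F hbij).symm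
    _ = (k + 1) * tau g := by
        rw [Nat.card_prod, Nat.card_eq_fintype_card, Fintype.card_fin, tau]
        rfl

lemma eq_of_mult_eq {h h' : Fq[X]} (hh : h.Monic) (hh' : h'.Monic)
    (hmm : ∀ p : Fq[X], p.Monic → Irreducible p → multiplicity p h' = multiplicity p h) :
    h' = h := by
  rw [← prod_nf_monic hh', ← prod_nf_monic hh]
  congr 1
  ext a
  by_cases ha : Irreducible a ∧ normalize a = a
  · obtain ⟨hairr, hanorm⟩ := ha
    have ha0 : a ≠ 0 := hairr.ne_zero
    have ham : a.Monic := by simpa [hanorm] using monic_normalize (p := a) ha0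
    have hcount : ∀ f : Fq[X], f.Monic →
        (normalizedFactors f).count a = multiplicity a f := by
      intro f hf
      have hfin : FiniteMultiplicity a f :=
        FiniteMultiplicity.of_not_isUnit hairr.not_isUnit hf.ne_zero
      exact count_normalizedFactors_eq hairr hanorm (pow_multiplicity_dvd a f)
        (hfin.not_pow_dvd_of_multiplicity_lt (Nat.lt_succ_self _))
    rw [hcount h' hh', hcount h hh, hmm a ham hairr]
  · rw [Multiset.count_eq_zero.mpr, Multiset.count_eq_zero.mpr]
    · intro hmem
      exact ha ⟨irreducible_of_normalized_factor a hmem, normalize_normalized_factor a hmem⟩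
    · intro hmem
      exact ha ⟨irreducible_of_normalized_factor a hmem, normalize_normalized_factor a hmem⟩

end Aux

lemma tie_aux {u v c : ℝ} (huv : u * v = 1) (hc : 0 < c)
    (h : (c + 1) * u = c) : v = 1 + 1 / c := by
  have h3 := congrArg (· * v) h
  rw [mul_assoc, huv, mul_one] at h3
  -- h3 : c + 1 = c * v
  rw [one_add_div hc.ne', eq_div_iff hc.ne']
  linarith [h3]

lemma floor_lemma {Q : ℝ} (hQ : 1 < Q) {x : ℝ} (hx : 0 < x) {d m : ℕ} (hd : 0 < d)
    (hne : ∀ r : ℕ, 0 < r → Q ^ ((d : ℝ) / x) ≠ 1 + 1 / (r : ℝ))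
    (hineq : ∀ k : ℕ, ((k : ℝ) + 1) * (Q ^ (-(d : ℝ) / x)) ^ k ≤
      ((m : ℝ) + 1) * (Q ^ (-(d : ℝ) / x)) ^ m) :
    m = ⌊1 / (Q ^ ((d : ℝ) / x) - 1)⌋₊ := by
  have hQ0 : (0 : ℝ) < Q := lt_trans zero_lt_one hQ
  have hdx : (0 : ℝ) < (d : ℝ) / x := by positivity
  have hv1 : 1 < Q ^ ((d : ℝ) / x) :=
    (Real.one_lt_rpow_iff_of_pos hQ0).mpr (Or.inl ⟨hQ, hdx⟩)
  have huveq : Q ^ (-(d : ℝ) / x) * Q ^ ((d : ℝ) / x) = 1 := by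
    rw [neg_div, Real.rpow_neg hQ0.le]
    field_simp
  set v : ℝ := Q ^ ((d : ℝ) / x) with hv
  set u : ℝ := Q ^ (-(d : ℝ) / x) with hu
  clear_value v u
  have hv0 : 0 < v := lt_trans zero_lt_one hv1
  have hu0 : 0 < u := by nlinarith [huveq]
  have hA0 : 0 < v - 1 := sub_pos.mpr hv1
  -- upper bound : (m+2) < (m+1) * v
  have hupper : (m : ℝ) + 2 < ((m : ℝ) + 1) * v := by
    have h1 := hineq (m + 1)
    have hpow : (0 : ℝ) < u ^ m := pow_pos hu0 m
    have h3 : ((m : ℝ) + 2) * u ≤ (m : ℝ) + 1 := by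
      rw [pow_succ, ← mul_assoc] at h1
      push_cast at h1
      nlinarith [h1, hpow]
    have h4 : ((m : ℝ) + 2) * u ≠ (m : ℝ) + 1 := by
      intro hcontra
      refine hne (m + 1) (Nat.succ_pos m) ?_
      push_cast
      exact tie_aux huveq (by positivity) (by push_cast; linarith [hcontra])
    have h5 : ((m : ℝ) + 2) * u < (m : ℝ) + 1 := lt_of_le_of_ne h3 h4
    nlinarith [mul_lt_mul_of_pos_right h5 hv0, huveq]
  have hlow : (m : ℝ) ≤ 1 / (v - 1) := by
    rcases Nat.eq_zero_or_pos m with hm | hm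
    · subst hm; simp only [Nat.cast_zero]; positivity
    obtain ⟨n, rfl⟩ : ∃ n, m = n + 1 := ⟨m - 1, (Nat.succ_pred_eq_of_pos hm).symm⟩
    have h1 := hineq n
    have hpow : (0 : ℝ) < u ^ n := pow_pos hu0 n
    have h3 : (n : ℝ) + 1 ≤ ((n : ℝ) + 2) * u := by
      push_cast at h1
      rw [pow_succ, ← mul_assoc] at h1
      nlinarith [h1, hpow]
    have h4 : (n : ℝ) + 1 ≠ ((n : ℝ) + 2) * u := by
      intro hcontra
      refine hne (n + 1) (Nat.succ_pos n) ?_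
      push_cast
      exact tie_aux huveq (by positivity) (by push_cast; linarith [hcontra])
    have h5 : (n : ℝ) + 1 < ((n : ℝ) + 2) * u := lt_of_le_of_ne h3 h4
    have h6 : ((n : ℝ) + 1) * v < (n : ℝ) + 2 := by
      nlinarith [mul_lt_mul_of_pos_right h5 hv0, huveq]
    rw [le_div_iff₀ hA0]
    push_cast
    nlinarith [h6]
  have hup : 1 / (v - 1) < (m : ℝ) + 1 := by
    rw [div_lt_iff₀ hA0]
    nlinarith [hupper]
  exact ((Nat.floor_eq_iff (by positivity)).mpr ⟨hlow, hup⟩).symm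


/-- For `x ∉ S`, a monic maximizer of `f ↦ τ(f) q^{-deg f / x}` has multiplicity
`⌊1/(q^{deg p / x} - 1)⌋` at each monic irreducible `p`; in particular it is unique. -/
theorem maximizer_multiplicities_of_not_mem_S {Fq : Type} [Field Fq] [Fintype Fq]
    (x : ℝ) (hx : 0 < x) (hxS : x ∉ Sset (Fintype.card Fq))
    (h : Fq[X]) (hmonic : h.Monic)
    (hmax : ∀ f : Fq[X], f.Monic →
      (tau f : ℝ) * (Fintype.card Fq : ℝ) ^ (-(f.natDegree : ℝ) / x) ≤
      (tau h : ℝ) * (Fintype.card Fq : ℝ) ^ (-(h.natDegree : ℝ) / x)) :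
    (∀ p : Fq[X], p.Monic → Irreducible p →
      mult p h = ⌊1 / ((Fintype.card Fq : ℝ) ^ ((p.natDegree : ℝ) / x) - 1)⌋₊) ∧
    (∀ h' : Fq[X], h'.Monic →
      (∀ f : Fq[X], f.Monic →
        (tau f : ℝ) * (Fintype.card Fq : ℝ) ^ (-(f.natDegree : ℝ) / x) ≤
        (tau h' : ℝ) * (Fintype.card Fq : ℝ) ^ (-(h'.natDegree : ℝ) / x)) →
      h' = h) := by
  classical
  set Q : ℝ := (Fintype.card Fq : ℝ) with hQdef
  have hQ : 1 < Q := by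
    rw [hQdef]
    exact_mod_cast Fintype.one_lt_card
  have hQ0 : (0 : ℝ) < Q := lt_trans zero_lt_one hQ
  -- the key step, valid for any maximizer
  have key : ∀ h'' : Fq[X], h''.Monic →
      (∀ f : Fq[X], f.Monic →
        (tau f : ℝ) * Q ^ (-(f.natDegree : ℝ) / x) ≤
        (tau h'' : ℝ) * Q ^ (-(h''.natDegree : ℝ) / x)) →
      ∀ p : Fq[X], p.Monic → Irreducible p →
        multiplicity p h'' = ⌊1 / (Q ^ ((p.natDegree : ℝ) / x) - 1)⌋₊ := by
    intro h'' hmon hmax' p hpm hirr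
    set d : ℕ := p.natDegree with hddef
    have hd : 0 < d := hirr.natDegree_pos
    set m : ℕ := multiplicity p h'' with hmdef
    have hfin : FiniteMultiplicity p h'' :=
      FiniteMultiplicity.of_not_isUnit hirr.not_isUnit hmon.ne_zero
    obtain ⟨g, hg, hpg⟩ := hfin.exists_eq_pow_mul_and_not_dvd
    have hgm : g.Monic := (hpm.pow m).of_mul_monic_left (hg ▸ hmon)
    have htaug : 0 < tau g := tau_pos hgm.ne_zero
    have hne : ∀ r : ℕ, 0 < r → Q ^ ((d : ℝ) / x) ≠ 1 + 1 / (r : ℝ) := by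
      intro r hr hcontra
      apply hxS
      have hlogQ : 0 < Real.log Q := Real.log_pos hQ
      have hL : 0 < Real.log (1 + 1 / (r : ℝ)) := by
        apply Real.log_pos
        have : (0 : ℝ) < 1 / (r : ℝ) := by positivity
        linarith
      have hlogv : ((d : ℝ) / x) * Real.log Q = Real.log (1 + 1 / (r : ℝ)) := by
        rw [← Real.log_rpow hQ0, hcontra]
      refine ⟨d, r, hd, hr, ?_⟩
      rw [eq_div_iff hL.ne']
      have h2 : (d : ℝ) * Real.log Q = x * Real.log (1 + 1 / (r : ℝ)) := by
        rw [div_mul_eq_mul_div, div_eq_iff hx.ne'] at hlogv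
        linarith
      rw [← hQdef]
      linarith
    have hineq : ∀ k : ℕ, ((k : ℝ) + 1) * (Q ^ (-(d : ℝ) / x)) ^ k ≤
        ((m : ℝ) + 1) * (Q ^ (-(d : ℝ) / x)) ^ m := by
      intro k
      have hdeg : ∀ j : ℕ, (p ^ j * g).natDegree = j * d + g.natDegree := by
        intro j
        rw [natDegree_mul (pow_ne_zero j hpm.ne_zero) hgm.ne_zero, natDegree_pow]
      have htauval : ∀ j : ℕ, tau (p ^ j * g) = (j + 1) * tau g :=
        tau_pow_mul hpm hirr hgm hpg
      have hrw : ∀ j : ℕ, Q ^ (-((j * d + g.natDegree : ℕ) : ℝ) / x) =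
          (Q ^ (-(d : ℝ) / x)) ^ j * Q ^ (-(g.natDegree : ℝ) / x) := by
        intro j
        rw [← Real.rpow_natCast (Q ^ (-(d : ℝ) / x)) j, ← Real.rpow_mul hQ0.le,
          ← Real.rpow_add hQ0]
        congr 1
        push_cast
        ring
      have h1 := hmax' (p ^ k * g) ((hpm.pow k).mul hgm)
      rw [← hmdef] at hg
      rw [hg, hdeg k, hdeg m, htauval k, htauval m, hrw k, hrw m] at h1
      have hw : (0 : ℝ) < Q ^ (-(g.natDegree : ℝ) / x) := Real.rpow_pos_of_pos hQ0 _
      have h2 : ((k : ℝ) + 1) * (tau g : ℝ) * ((Q ^ (-(d : ℝ) / x)) ^ k * Q ^ (-(g.natDegree : ℝ) / x)) ≤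
          ((m : ℝ) + 1) * (tau g : ℝ) * ((Q ^ (-(d : ℝ) / x)) ^ m * Q ^ (-(g.natDegree : ℝ) / x)) := by
        convert h1 using 2 <;> push_cast <;> ring
      have htaugR : (0 : ℝ) < (tau g : ℝ) := by exact_mod_cast htaug
      calc ((k : ℝ) + 1) * (Q ^ (-(d : ℝ) / x)) ^ k
          = ((k : ℝ) + 1) * (tau g : ℝ) * ((Q ^ (-(d : ℝ) / x)) ^ k * Q ^ (-(g.natDegree : ℝ) / x)) /
            ((tau g : ℝ) * Q ^ (-(g.natDegree : ℝ) / x)) := by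
            field_simp
        _ ≤ ((m : ℝ) + 1) * (tau g : ℝ) * ((Q ^ (-(d : ℝ) / x)) ^ m * Q ^ (-(g.natDegree : ℝ) / x)) /
            ((tau g : ℝ) * Q ^ (-(g.natDegree : ℝ) / x)) := by
            exact (div_le_div_iff_of_pos_right (by positivity)).mpr h2
        _ = ((m : ℝ) + 1) * (Q ^ (-(d : ℝ) / x)) ^ m := by
            field_simp
    exact floor_lemma hQ hx hd hne hineq
  constructor
  · intro p hpm hirr
    exact key h hmonic hmax p hpm hirr
  · intro h' h'mon h'max
    refine eq_of_mult_eq hmonic h'mon ?_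
    intro p hpm hirr
    rw [key h' h'mon h'max p hpm hirr, key h hmonic hmax p hpm hirr]
end

section
/- For every x > 0 there is one and only one x-superior highly composite polynomial, namely the polynomial ĥ(x) whose multiplicity at each monic irreducible p ∈ 𝔽_q[t] equals a_{deg p}(x) = ⌊1/(q^{deg p/x} − 1)⌋. -/
open Polynomial

/-- `h = ĥ(x)`: the monic polynomial whose multiplicity at each monic irreducible `p`
equals `⌊1/(q^{deg p / x} - 1)⌋`. -/
noncomputable def IsHhat {Fq : Type} [Field Fq] [Fintype Fq] (x : ℝ) (h : Fq[X]) : Prop :=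
  h.Monic ∧ ∀ p : Fq[X], p.Monic → Irreducible p →
    mult p h = ⌊1 / ((Fintype.card Fq : ℝ) ^ ((p.natDegree : ℝ) / x) - 1)⌋₊

/-- `h` is an `x`-superior highly composite polynomial. -/
noncomputable def IsSHC {Fq : Type} [Field Fq] [Fintype Fq] (x : ℝ) (h : Fq[X]) : Prop :=
  h.Monic ∧
    (∀ f : Fq[X], f.Monic → f.natDegree ≤ h.natDegree →
      (tau f : ℝ) * (Fintype.card Fq : ℝ) ^ (-(f.natDegree : ℝ) / x) ≤
      (tau h : ℝ) * (Fintype.card Fq : ℝ) ^ (-(h.natDegree : ℝ) / x)) ∧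
    (∀ f : Fq[X], f.Monic → h.natDegree < f.natDegree →
      (tau f : ℝ) * (Fintype.card Fq : ℝ) ^ (-(f.natDegree : ℝ) / x) <
      (tau h : ℝ) * (Fintype.card Fq : ℝ) ^ (-(h.natDegree : ℝ) / x))


namespace SHCProof
set_option linter.unusedSectionVars false
set_option linter.unusedVariables false
set_option maxHeartbeats 1000000
open UniqueFactorizationMonoid

section factorization
variable {Fq : Type} [Field Fq] [Fintype Fq] [DecidableEq Fq] [DecidableEq Fq[X]]

lemma nf_mem {f b : Fq[X]} (hb : b ∈ normalizedFactors f) : b.Monic ∧ Irreducible b := by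
  have hirr := irreducible_of_normalized_factor b hb
  have hn : normalize b = b := normalize_normalized_factor b hb
  exact ⟨hn ▸ Polynomial.monic_normalize hirr.ne_zero, hirr⟩

lemma pow_dvd_iff {p f : Fq[X]} (hp : p.Monic) (hip : Irreducible p) (hf : f ≠ 0) (k : ℕ) :
    p ^ k ∣ f ↔ k ≤ (normalizedFactors f).count p := by
  have hpk : (p : Fq[X]) ^ k ≠ 0 := pow_ne_zero _ hip.ne_zero
  rw [dvd_iff_normalizedFactors_le_normalizedFactors hpk hf, normalizedFactors_pow,
    normalizedFactors_irreducible hip, hp.normalize_eq_self, Multiset.nsmul_singleton]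
  exact Multiset.le_count_iff_replicate_le.symm

lemma mult_eq_count {p f : Fq[X]} (hp : p.Monic) (hip : Irreducible p) (hf : f ≠ 0) :
    multiplicity p f = (normalizedFactors f).count p := by
  refine multiplicity_eq_of_dvd_of_not_dvd ?_ ?_
  · exact (pow_dvd_iff hp hip hf _).2 le_rfl
  · rw [pow_dvd_iff hp hip hf]; omega

lemma nf_prod_pow (S : Finset Fq[X]) (hS : ∀ p ∈ S, p.Monic ∧ Irreducible p) (c : Fq[X] → ℕ) :
    normalizedFactors (∏ p ∈ S, p ^ c p) = ∑ p ∈ S, c p • ({p} : Multiset Fq[X]) := by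
  classical
  induction S using Finset.induction with
  | empty => simpa using normalizedFactors_one
  | @insert a s ha ih =>
    have hSa : ∀ p ∈ s, p.Monic ∧ Irreducible p := fun p hp => hS p (Finset.mem_insert_of_mem hp)
    have h1 : (a : Fq[X]) ^ c a ≠ 0 := pow_ne_zero _ (hS a (Finset.mem_insert_self a s)).2.ne_zero
    have h2 : (∏ p ∈ s, p ^ c p) ≠ 0 :=
      Finset.prod_ne_zero_iff.mpr fun p hp => pow_ne_zero _ (hSa p hp).2.ne_zero
    rw [Finset.prod_insert ha, Finset.sum_insert ha, normalizedFactors_mul h1 h2,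
      normalizedFactors_pow, normalizedFactors_irreducible (hS a (Finset.mem_insert_self a s)).2,
      (hS a (Finset.mem_insert_self a s)).1.normalize_eq_self, ih hSa]

lemma count_sum_smul {S : Finset Fq[X]} (c : Fq[X] → ℕ) (p : Fq[X]) :
    Multiset.count p (∑ q ∈ S, c q • ({q} : Multiset Fq[X])) = if p ∈ S then c p else 0 := by
  rw [Multiset.count_sum']
  rw [Finset.sum_congr rfl (fun q _ => by
    rw [Multiset.count_nsmul, Multiset.count_singleton])]
  simp only [mul_ite, mul_one, mul_zero]
  exact Finset.sum_ite_eq S p c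

lemma mult_prod_pow (S : Finset Fq[X]) (hS : ∀ p ∈ S, p.Monic ∧ Irreducible p) (c : Fq[X] → ℕ)
    {p : Fq[X]} (hp : p.Monic) (hip : Irreducible p) :
    multiplicity p (∏ q ∈ S, q ^ c q) = if p ∈ S then c p else 0 := by
  have hne : (∏ q ∈ S, q ^ c q) ≠ 0 :=
    Finset.prod_ne_zero_iff.mpr fun q hq => pow_ne_zero _ (hS q hq).2.ne_zero
  rw [mult_eq_count hp hip hne, nf_prod_pow S hS c, count_sum_smul]

lemma monic_eq_prod {f : Fq[X]} (hf : f.Monic) (S : Finset Fq[X])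
    (hsub : (normalizedFactors f).toFinset ⊆ S) :
    f = ∏ p ∈ S, p ^ (normalizedFactors f).count p := by
  have h0 : f ≠ 0 := hf.ne_zero
  have hmon : ((normalizedFactors f).prod).Monic := by
    have := Polynomial.monic_multiset_prod_of_monic (normalizedFactors f) id
      (fun b hb => (nf_mem hb).1)
    simpa using this
  have h1 : (normalizedFactors f).prod = f :=
    Polynomial.eq_of_monic_of_associated hmon hf (prod_normalizedFactors h0)
  conv_lhs => rw [← h1]
  rw [Finset.prod_multiset_count]
  refine Finset.prod_subset hsub fun p _ hnot => ?_
  rw [Multiset.count_eq_zero_of_notMem (fun hm => hnot (Multiset.mem_toFinset.2 hm)), pow_zero]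


/-- assemble an exponent vector into a product -/
noncomputable def Phi (S : Finset Fq[X]) (c : ∀ p ∈ S, ℕ) : Fq[X] :=
  ∏ p ∈ S, p ^ (if h : p ∈ S then c p h else 0)

lemma tau_prod_pow (S : Finset Fq[X]) (hS : ∀ p ∈ S, p.Monic ∧ Irreducible p) (e : Fq[X] → ℕ) :
    tau (∏ p ∈ S, p ^ e p) = ∏ p ∈ S, (e p + 1) := by
  classical
  set f : Fq[X] := ∏ p ∈ S, p ^ e p with hfdef
  have hfm : f.Monic := monic_prod_of_monic _ _ fun p hp => (hS p hp).1.pow _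
  have hf0 : f ≠ 0 := hfm.ne_zero
  have hΦ : ∀ c : ∀ p ∈ S, ℕ, Phi S c = ∏ p ∈ S, p ^ (if h : p ∈ S then c p h else 0) :=
    fun c => rfl
  set P : Finset (∀ p ∈ S, ℕ) := S.pi (fun p => Finset.range (e p + 1)) with hPdef
  have hmult : ∀ (c : ∀ p ∈ S, ℕ) {p : Fq[X]} (hp : p ∈ S),
      multiplicity p (Phi S c) = c p hp := by
    intro c p hp
    rw [hΦ c, mult_prod_pow S hS _ (hS p hp).1 (hS p hp).2, if_pos hp, dif_pos hp]
  have hkey : {d : Fq[X] | d.Monic ∧ d ∣ f} = ↑(P.image (Phi S)) := by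
    ext d
    simp only [Finset.coe_image, Set.mem_image, Finset.mem_coe, Set.mem_setOf_eq]
    constructor
    · rintro ⟨hdm, hdvd⟩
      have hd0 : d ≠ 0 := hdm.ne_zero
      have hle : normalizedFactors d ≤ normalizedFactors f :=
        (dvd_iff_normalizedFactors_le_normalizedFactors hd0 hf0).1 hdvd
      have hsub : (normalizedFactors d).toFinset ⊆ S := by
        intro b hb
        have hbmem : b ∈ normalizedFactors f := Multiset.mem_of_le hle (Multiset.mem_toFinset.1 hb)
        rw [hfdef, nf_prod_pow S hS e] at hbmem
        obtain ⟨p, hpS, hbp⟩ := Multiset.mem_sum.1 hbmem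
        have : b = p := by
          have := Multiset.mem_of_mem_nsmul hbp
          simpa using this
        rwa [this]
      have hcnt : ∀ p ∈ S, (normalizedFactors d).count p ≤ e p := by
        intro p hp
        have h1 : (normalizedFactors d).count p ≤ (normalizedFactors f).count p :=
          Multiset.count_le_of_le p hle
        rw [hfdef, nf_prod_pow S hS e, count_sum_smul, if_pos hp] at h1
        exact h1
      refine ⟨fun p hp => (normalizedFactors d).count p, ?_, ?_⟩
      · rw [hPdef, Finset.mem_pi]
        intro p hp
        exact Finset.mem_range.2 (Nat.lt_succ_of_le (hcnt p hp))
      · refine (hΦ _).trans ?_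
        conv_rhs => rw [monic_eq_prod hdm S hsub]
        exact Finset.prod_congr rfl fun p hp => by rw [dif_pos hp]
    · rintro ⟨c, hc, rfl⟩
      constructor
      · rw [hΦ]
        exact monic_prod_of_monic _ _ fun p hp => (hS p hp).1.pow _
      · rw [hΦ, hfdef]
        refine Finset.prod_dvd_prod_of_dvd _ _ fun p hp => ?_
        refine pow_dvd_pow p ?_
        rw [dif_pos hp]
        have := (Finset.mem_pi.1 hc) p hp
        exact Nat.lt_succ_iff.1 (Finset.mem_range.1 this)
  have hinj : Set.InjOn (Phi S) ↑P := by
    intro c hc c' hc' hcc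
    funext p hp
    have h1 := hmult c hp
    have h2 := hmult c' hp
    rw [hcc] at h1
    exact h1.symm.trans h2
  rw [tau, hkey, Set.ncard_coe_finset, Finset.card_image_of_injOn hinj, Finset.card_pi]
  exact Finset.prod_congr rfl fun p _ => by rw [Finset.card_range]

lemma natDegree_prod_pow (S : Finset Fq[X]) (hS : ∀ p ∈ S, p.Monic ∧ Irreducible p)
    (e : Fq[X] → ℕ) :
    (∏ p ∈ S, p ^ e p).natDegree = ∑ p ∈ S, e p * p.natDegree := by
  rw [Polynomial.natDegree_prod _ _ (fun p hp => pow_ne_zero _ (hS p hp).1.ne_zero)]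
  exact Finset.sum_congr rfl fun p _ => natDegree_pow _ _


end factorization

/-- single-prime weight factor -/
noncomputable def g (Q x : ℝ) (d e : ℕ) : ℝ := ((e : ℝ) + 1) * (Q ^ (-(d : ℝ) / x)) ^ e

/-- optimal exponent -/
noncomputable def aexp (Q x : ℝ) (d : ℕ) : ℕ := ⌊1 / (Q ^ ((d : ℝ) / x) - 1)⌋₊

section anal
variable {Q x : ℝ} (hx : 0 < x) (hQ : 2 ≤ Q) {d : ℕ} (hd : 1 ≤ d)

include hx hQ hd

lemma hr_one_lt : 1 < Q ^ ((d : ℝ) / x) := by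
  have hQ1 : (1 : ℝ) < Q := by linarith
  have : (0 : ℝ) < (d : ℝ) / x := by positivity
  exact Real.one_lt_rpow_iff_of_pos (by linarith) |>.2 (Or.inl ⟨hQ1, this⟩)

lemma ht_eq : Q ^ (-(d : ℝ) / x) = (Q ^ ((d : ℝ) / x))⁻¹ := by
  rw [neg_div, Real.rpow_neg (by linarith)]

lemma g_pos (e : ℕ) : 0 < g Q x d e := by
  have : (0:ℝ) < Q ^ (-(d : ℝ) / x) := Real.rpow_pos_of_pos (by linarith) _
  have := pow_pos this e
  unfold g; positivity

lemma g_step_le {e : ℕ} (he : e + 1 ≤ aexp Q x d) : g Q x d e ≤ g Q x d (e + 1) := by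
  set r : ℝ := Q ^ ((d : ℝ) / x) with hr
  have hr1 : 1 < r := hr_one_lt hx hQ hd
  have hy : (0:ℝ) ≤ 1 / (r - 1) := by
    have : (0:ℝ) < r - 1 := by linarith
    positivity
  have h1 : ((e : ℝ) + 1) ≤ 1 / (r - 1) := by
    have h' : ((e + 1 : ℕ) : ℝ) ≤ (⌊1 / (r - 1)⌋₊ : ℝ) := Nat.cast_le.2 he
    calc ((e : ℝ) + 1) = ((e + 1 : ℕ) : ℝ) := by push_cast; ring
      _ ≤ _ := h'.trans (Nat.floor_le hy)
  have h2 : ((e : ℝ) + 1) * (r - 1) ≤ 1 := by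
    rw [div_eq_mul_inv, one_mul] at h1
    calc ((e : ℝ) + 1) * (r - 1) ≤ (r - 1)⁻¹ * (r - 1) := by
          apply mul_le_mul_of_nonneg_right h1 (by linarith)
      _ = 1 := inv_mul_cancel₀ (by linarith)
  have h3 : ((e : ℝ) + 1) * r ≤ (e : ℝ) + 2 := by nlinarith
  have ht : Q ^ (-(d : ℝ) / x) = r⁻¹ := ht_eq hx hQ hd
  unfold g
  rw [ht]
  have hrpos : (0:ℝ) < r := by linarith
  have hipos : (0:ℝ) < r⁻¹ := by positivity
  push_cast
  rw [pow_succ]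
  have hpow : (0:ℝ) < r⁻¹ ^ e := pow_pos hipos e
  rw [show ((e:ℝ) + 1 + 1) * (r⁻¹ ^ e * r⁻¹) = ((e + 2) * r⁻¹) * r⁻¹ ^ e by ring,
    show ((e:ℝ) + 1) * r⁻¹ ^ e = ((e:ℝ) + 1) * r⁻¹ ^ e from rfl]
  apply mul_le_mul_of_nonneg_right _ hpow.le
  rw [← mul_le_mul_iff_of_pos_right hrpos]
  calc ((e:ℝ) + 1) * r ≤ (e:ℝ) + 2 := h3
    _ = ((e:ℝ) + 2) * (r⁻¹ * r) := by rw [inv_mul_cancel₀ hrpos.ne']; ring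
    _ = ((e:ℝ) + 2) * r⁻¹ * r := by ring

lemma g_step_lt {e : ℕ} (he : aexp Q x d ≤ e) : g Q x d (e + 1) < g Q x d e := by
  set r : ℝ := Q ^ ((d : ℝ) / x) with hr
  have hr1 : 1 < r := hr_one_lt hx hQ hd
  have h1 : 1 / (r - 1) < (e : ℝ) + 1 := by
    have h := Nat.lt_floor_add_one (1 / (r - 1))
    have h'' : (⌊1 / (r - 1)⌋₊ : ℝ) ≤ (e : ℝ) := Nat.cast_le.2 he
    linarith
  have h2 : 1 < ((e : ℝ) + 1) * (r - 1) := by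
    rw [div_lt_iff₀ (by linarith)] at h1
    linarith
  have h3 : (e : ℝ) + 2 < ((e : ℝ) + 1) * r := by nlinarith
  have ht : Q ^ (-(d : ℝ) / x) = r⁻¹ := ht_eq hx hQ hd
  unfold g
  rw [ht]
  have hrpos : (0:ℝ) < r := by linarith
  have hipos : (0:ℝ) < r⁻¹ := by positivity
  have hpow : (0:ℝ) < r⁻¹ ^ e := pow_pos hipos e
  push_cast
  rw [pow_succ]
  rw [show ((e:ℝ) + 1 + 1) * (r⁻¹ ^ e * r⁻¹) = ((e + 2) * r⁻¹) * r⁻¹ ^ e by ring]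
  apply mul_lt_mul_of_pos_right _ hpow
  rw [← mul_lt_mul_iff_of_pos_right hrpos]
  calc ((e:ℝ) + 2) * r⁻¹ * r = ((e:ℝ) + 2) * (r⁻¹ * r) := by ring
    _ = (e:ℝ) + 2 := by rw [inv_mul_cancel₀ hrpos.ne']; ring
    _ < ((e:ℝ) + 1) * r := h3

lemma g_chain_lt (k : ℕ) : g Q x d (aexp Q x d + k + 1) < g Q x d (aexp Q x d) := by
  induction k with
  | zero => exact g_step_lt hx hQ hd le_rfl
  | succ n ih =>
    have h2 : g Q x d (aexp Q x d + n + 1 + 1) < g Q x d (aexp Q x d + n + 1) :=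
      g_step_lt hx hQ hd (by omega)
    have : aexp Q x d + (n + 1) + 1 = aexp Q x d + n + 1 + 1 := by omega
    rw [this]
    exact h2.trans ih

lemma g_le_max (e : ℕ) : g Q x d e ≤ g Q x d (aexp Q x d) := by
  rcases le_or_gt e (aexp Q x d) with h | h
  · have H : ∀ k e', aexp Q x d = e' + k → g Q x d e' ≤ g Q x d (aexp Q x d) := by
      intro k
      induction k with
      | zero => intro e' hk; rw [hk, Nat.add_zero]
      | succ n ih =>
        intro e' hk
        have h1 : e' + 1 ≤ aexp Q x d := by omega
        exact (g_step_le hx hQ hd h1).trans (ih (e' + 1) (by omega))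
    obtain ⟨k, hk⟩ := Nat.exists_eq_add_of_le h
    exact H k e hk
  · obtain ⟨k, hk⟩ := Nat.exists_eq_add_of_lt h
    rw [hk]
    exact (g_chain_lt hx hQ hd k).le

lemma g_lt_max {e : ℕ} (h : aexp Q x d < e) : g Q x d e < g Q x d (aexp Q x d) := by
  obtain ⟨k, hk⟩ := Nat.exists_eq_add_of_lt h
  rw [hk]
  exact g_chain_lt hx hQ hd k

lemma aexp_eq_zero (hdx : x < (d : ℝ)) : aexp Q x d = 0 := by
  have hQ1 : (1:ℝ) < Q := by linarith
  have h1 : (1:ℝ) < (d : ℝ) / x := (one_lt_div hx).2 hdx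
  have h2 : (2:ℝ) < Q ^ ((d : ℝ) / x) := by
    calc (2:ℝ) ≤ Q := hQ
      _ = Q ^ (1:ℝ) := (Real.rpow_one Q).symm
      _ < Q ^ ((d : ℝ) / x) := by
        rw [Real.rpow_lt_rpow_left_iff hQ1]; exact h1
  apply Nat.floor_eq_zero.2
  rw [div_lt_one (by linarith)]
  linarith

end anal

lemma rpow_sum' {α : Type*} {Q : ℝ} (hQ : 0 < Q) (S : Finset α) (f : α → ℝ) :
    Q ^ (∑ i ∈ S, f i) = ∏ i ∈ S, Q ^ f i := by
  classical
  induction S using Finset.induction with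
  | empty => simp
  | @insert a s ha ih =>
    rw [Finset.sum_insert ha, Finset.prod_insert ha, Real.rpow_add hQ, ih]


section main
variable {Fq : Type} [Field Fq] [Fintype Fq]

lemma card_two_le : (2 : ℝ) ≤ (Fintype.card Fq : ℝ) := by
  have : 1 < Fintype.card Fq := Fintype.one_lt_card
  exact_mod_cast this

lemma card_pos' : (0 : ℝ) < (Fintype.card Fq : ℝ) := lt_of_lt_of_le (by norm_num) card_two_le

lemma irred_deg_pos {p : Fq[X]} (hip : Irreducible p) : 1 ≤ p.natDegree :=
  natDegree_pos_iff_degree_pos.mpr (degree_pos_of_irreducible hip)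

lemma finite_bdd (N : ℕ) : {p : Fq[X] | p.Monic ∧ Irreducible p ∧ p.natDegree ≤ N}.Finite := by
  classical
  have h : Set.InjOn (fun p : Fq[X] => fun i : Fin (N + 1) => p.coeff i)
      {p : Fq[X] | p.Monic ∧ Irreducible p ∧ p.natDegree ≤ N} := by
    intro p hp q hq hpq
    ext n
    rcases le_or_gt n N with hn | hn
    · exact congrFun hpq ⟨n, by omega⟩
    · rw [Polynomial.coeff_eq_zero_of_natDegree_lt (lt_of_le_of_lt hp.2.2 hn),
        Polynomial.coeff_eq_zero_of_natDegree_lt (lt_of_le_of_lt hq.2.2 hn)]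
  exact Set.Finite.of_finite_image (Set.toFinite _) h

noncomputable def S0 (Fq : Type) [Field Fq] [Fintype Fq] (x : ℝ) : Finset Fq[X] :=
  (finite_bdd (Fq := Fq) ⌈x⌉₊).toFinset

lemma mem_S0 {x : ℝ} {p : Fq[X]} :
    p ∈ S0 Fq x ↔ p.Monic ∧ Irreducible p ∧ p.natDegree ≤ ⌈x⌉₊ := Set.Finite.mem_toFinset _

lemma hS0 {x : ℝ} : ∀ p ∈ S0 Fq x, p.Monic ∧ Irreducible p :=
  fun p hp => ⟨(mem_S0.1 hp).1, (mem_S0.1 hp).2.1⟩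

noncomputable def hhat (Fq : Type) [Field Fq] [Fintype Fq] (x : ℝ) : Fq[X] :=
  ∏ p ∈ S0 Fq x, p ^ aexp (Fintype.card Fq) x p.natDegree

lemma hhat_monic (x : ℝ) : (hhat Fq x).Monic :=
  monic_prod_of_monic _ _ fun p hp => ((hS0 p hp).1).pow _

lemma aexp_vanish {x : ℝ} (hx : 0 < x) {p : Fq[X]} (hm : p.Monic) (hip : Irreducible p)
    (hnot : p ∉ S0 Fq x) : aexp (Fintype.card Fq) x p.natDegree = 0 := by
  have hdeg : ¬ p.natDegree ≤ ⌈x⌉₊ := fun hle => hnot (mem_S0.2 ⟨hm, hip, hle⟩)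
  push_neg at hdeg
  refine aexp_eq_zero hx card_two_le (irred_deg_pos hip) ?_
  have h1 : x ≤ (⌈x⌉₊ : ℝ) := Nat.le_ceil x
  have h2 : (⌈x⌉₊ : ℝ) + 1 ≤ (p.natDegree : ℝ) := by exact_mod_cast hdeg
  linarith

lemma hhat_eq_prod {x : ℝ} (hx : 0 < x) (S : Finset Fq[X]) (hsub : S0 Fq x ⊆ S)
    (hS : ∀ p ∈ S, p.Monic ∧ Irreducible p) :
    hhat Fq x = ∏ p ∈ S, p ^ aexp (Fintype.card Fq) x p.natDegree := by
  refine Finset.prod_subset hsub fun p hp hnot => ?_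
  rw [aexp_vanish hx (hS p hp).1 (hS p hp).2 hnot, pow_zero]

lemma hhat_mult {x : ℝ} (hx : 0 < x) {p : Fq[X]} (hm : p.Monic) (hip : Irreducible p) :
    multiplicity p (hhat Fq x) = aexp (Fintype.card Fq) x p.natDegree := by
  classical
  rw [hhat, mult_prod_pow (S0 Fq x) hS0 _ hm hip]
  by_cases hp : p ∈ S0 Fq x
  · rw [if_pos hp]
  · rw [if_neg hp, aexp_vanish hx hm hip hp]

lemma weight_eq {x : ℝ} (hx : 0 < x) (S : Finset Fq[X]) (hS : ∀ p ∈ S, p.Monic ∧ Irreducible p)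
    (e : Fq[X] → ℕ) :
    (tau (∏ p ∈ S, p ^ e p) : ℝ) *
      (Fintype.card Fq : ℝ) ^ (-((∏ p ∈ S, p ^ e p).natDegree : ℝ) / x) =
    ∏ p ∈ S, g (Fintype.card Fq) x p.natDegree (e p) := by
  classical
  have hQ0 : (0:ℝ) < (Fintype.card Fq : ℝ) := card_pos'
  rw [tau_prod_pow S hS e, natDegree_prod_pow S hS e]
  have hexp : -((∑ p ∈ S, e p * p.natDegree : ℕ) : ℝ) / x =
      ∑ p ∈ S, (-(p.natDegree : ℝ) / x) * (e p : ℕ) := by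
    rw [Finset.sum_congr rfl (fun p _ => show (-(p.natDegree : ℝ) / x) * (e p : ℕ) =
      -(((e p * p.natDegree : ℕ) : ℝ)) / x by push_cast; ring)]
    rw [← Finset.sum_div, Nat.cast_sum, ← Finset.sum_neg_distrib]
  rw [hexp, rpow_sum' hQ0, Nat.cast_prod, ← Finset.prod_mul_distrib]
  refine Finset.prod_congr rfl fun p hp => ?_
  rw [Real.rpow_mul hQ0.le, Real.rpow_natCast]
  unfold g
  push_cast
  ring

lemma decomp [DecidableEq Fq] [DecidableEq Fq[X]] {x : ℝ} (hx : 0 < x) {f : Fq[X]} (hf : f.Monic) :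
    ∃ S : Finset Fq[X], (∀ p ∈ S, p.Monic ∧ Irreducible p) ∧ S0 Fq x ⊆ S ∧
      f = ∏ p ∈ S, p ^ (normalizedFactors f).count p ∧
      hhat Fq x = ∏ p ∈ S, p ^ aexp (Fintype.card Fq) x p.natDegree := by
  classical
  refine ⟨S0 Fq x ∪ (normalizedFactors f).toFinset, ?_, Finset.subset_union_left, ?_, ?_⟩
  · intro p hp
    rcases Finset.mem_union.1 hp with h | h
    · exact hS0 p h
    · exact nf_mem (Multiset.mem_toFinset.1 h)
  · exact monic_eq_prod hf _ Finset.subset_union_right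
  · refine hhat_eq_prod hx _ Finset.subset_union_left fun p hp => ?_
    rcases Finset.mem_union.1 hp with h | h
    · exact hS0 p h
    · exact nf_mem (Multiset.mem_toFinset.1 h)

section cmp
variable [DecidableEq Fq] [DecidableEq Fq[X]] {x : ℝ} (hx : 0 < x)

/-- weight -/
noncomputable def W (x : ℝ) (f : Fq[X]) : ℝ :=
  (tau f : ℝ) * (Fintype.card Fq : ℝ) ^ (-(f.natDegree : ℝ) / x)

include hx

lemma weight_le (f : Fq[X]) (hf : f.Monic) : W x f ≤ W x (hhat Fq x) := by
  obtain ⟨S, hS, hsub, hfeq, hheq⟩ := decomp hx hf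
  have w1 := weight_eq hx S hS (fun p => (normalizedFactors f).count p)
  rw [← hfeq] at w1
  have w2 := weight_eq hx S hS (fun p => aexp (Fintype.card Fq) x p.natDegree)
  rw [← hheq] at w2
  show W x f ≤ W x (hhat Fq x)
  unfold W
  rw [w1, w2]
  refine Finset.prod_le_prod (fun p hp => (g_pos hx card_two_le (irred_deg_pos (hS p hp).2) _).le)
    (fun p hp => g_le_max hx card_two_le (irred_deg_pos (hS p hp).2) _)

lemma weight_lt (f : Fq[X]) (hf : f.Monic) (hdeg : (hhat Fq x).natDegree < f.natDegree) :
    W x f < W x (hhat Fq x) := by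
  obtain ⟨S, hS, hsub, hfeq, hheq⟩ := decomp hx hf
  have w1 := weight_eq hx S hS (fun p => (normalizedFactors f).count p)
  rw [← hfeq] at w1
  have w2 := weight_eq hx S hS (fun p => aexp (Fintype.card Fq) x p.natDegree)
  rw [← hheq] at w2
  have hd1 := natDegree_prod_pow S hS (fun p => (normalizedFactors f).count p)
  rw [← hfeq] at hd1
  have hd2 := natDegree_prod_pow S hS (fun p => aexp (Fintype.card Fq) x p.natDegree)
  rw [← hheq] at hd2
  have hex : ∃ p ∈ S, aexp (Fintype.card Fq) x p.natDegree < (normalizedFactors f).count p := by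
    by_contra hcon
    push_neg at hcon
    have : f.natDegree ≤ (hhat Fq x).natDegree := by
      rw [hd1, hd2]
      exact Finset.sum_le_sum fun p hp => Nat.mul_le_mul_right _ (hcon p hp)
    omega
  obtain ⟨p0, hp0, hlt0⟩ := hex
  unfold W
  rw [w1, w2]
  refine Finset.prod_lt_prod (fun p hp => g_pos hx card_two_le (irred_deg_pos (hS p hp).2) _)
    (fun p hp => g_le_max hx card_two_le (irred_deg_pos (hS p hp).2) _)
    ⟨p0, hp0, g_lt_max hx card_two_le (irred_deg_pos (hS p0 hp0).2) hlt0⟩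

lemma eq_hhat (f : Fq[X]) (hf : f.Monic) (hW : W x f = W x (hhat Fq x))
    (hdeg : (hhat Fq x).natDegree ≤ f.natDegree) : f = hhat Fq x := by
  obtain ⟨S, hS, hsub, hfeq, hheq⟩ := decomp hx hf
  have w1 := weight_eq hx S hS (fun p => (normalizedFactors f).count p)
  rw [← hfeq] at w1
  have w2 := weight_eq hx S hS (fun p => aexp (Fintype.card Fq) x p.natDegree)
  rw [← hheq] at w2
  have hd1 := natDegree_prod_pow S hS (fun p => (normalizedFactors f).count p)
  rw [← hfeq] at hd1
  have hd2 := natDegree_prod_pow S hS (fun p => aexp (Fintype.card Fq) x p.natDegree)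
  rw [← hheq] at hd2
  have hall : ∀ p ∈ S, (normalizedFactors f).count p ≤ aexp (Fintype.card Fq) x p.natDegree := by
    intro p hp
    by_contra hcon
    push_neg at hcon
    have hstrict : W x f < W x (hhat Fq x) := by
      unfold W
      rw [w1, w2]
      refine Finset.prod_lt_prod (fun p hp => g_pos hx card_two_le (irred_deg_pos (hS p hp).2) _)
        (fun p hp => g_le_max hx card_two_le (irred_deg_pos (hS p hp).2) _)
        ⟨p, hp, g_lt_max hx card_two_le (irred_deg_pos (hS p hp).2) hcon⟩
    rw [hW] at hstrict
    exact lt_irrefl _ hstrict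
  have hsum_le : ∀ p ∈ S, (normalizedFactors f).count p * p.natDegree ≤
      aexp (Fintype.card Fq) x p.natDegree * p.natDegree :=
    fun p hp => Nat.mul_le_mul_right _ (hall p hp)
  have hdegle : f.natDegree ≤ (hhat Fq x).natDegree := by
    rw [hd1, hd2]
    exact Finset.sum_le_sum hsum_le
  have hdeq : f.natDegree = (hhat Fq x).natDegree := le_antisymm hdegle hdeg
  have hsums : ∑ p ∈ S, (normalizedFactors f).count p * p.natDegree =
      ∑ p ∈ S, aexp (Fintype.card Fq) x p.natDegree * p.natDegree := by
    rw [← hd1, ← hd2, hdeq]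
  have hterm := (Finset.sum_eq_sum_iff_of_le hsum_le).1 hsums
  have hcnt : ∀ p ∈ S, (normalizedFactors f).count p = aexp (Fintype.card Fq) x p.natDegree := by
    intro p hp
    have hd : 0 < p.natDegree := irred_deg_pos (hS p hp).2
    exact Nat.eq_of_mul_eq_mul_right hd (hterm p hp)
  rw [hfeq, hheq]
  exact Finset.prod_congr rfl fun p hp => by rw [hcnt p hp]

end cmp
end main

end SHCProof

/-- For every `x > 0` there is one and only one `x`-superior highly composite polynomial,
namely `ĥ(x)`. -/
theorem shc_exists_unique {Fq : Type} [Field Fq] [Fintype Fq] (x : ℝ) (hx : 0 < x) :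
    (∃! h : Fq[X], IsSHC x h) ∧ (∀ h : Fq[X], IsSHC x h → IsHhat x h) := by
  classical
  have hSHC : IsSHC x (SHCProof.hhat Fq x) := by
    refine ⟨SHCProof.hhat_monic x, fun f hf _ => ?_, fun f hf hdeg => ?_⟩
    · exact SHCProof.weight_le hx f hf
    · exact SHCProof.weight_lt hx f hf hdeg
  have hhat_IsHhat : IsHhat x (SHCProof.hhat Fq x) := by
    refine ⟨SHCProof.hhat_monic x, fun p hm hip => ?_⟩
    exact SHCProof.hhat_mult hx hm hip
  have huniq : ∀ h' : Fq[X], IsSHC x h' → h' = SHCProof.hhat Fq x := by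
    rintro h' ⟨hm, hle, hlt⟩
    have h1 : SHCProof.W x h' ≤ SHCProof.W x (SHCProof.hhat Fq x) := SHCProof.weight_le hx h' hm
    rcases le_or_gt (SHCProof.hhat Fq x).natDegree h'.natDegree with hdeg | hdeg
    · have h2 : SHCProof.W x (SHCProof.hhat Fq x) ≤ SHCProof.W x h' :=
        hle (SHCProof.hhat Fq x) (SHCProof.hhat_monic x) hdeg
      exact SHCProof.eq_hhat hx h' hm (le_antisymm h1 h2) hdeg
    · exfalso
      have h2 : SHCProof.W x (SHCProof.hhat Fq x) < SHCProof.W x h' :=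
        hlt (SHCProof.hhat Fq x) (SHCProof.hhat_monic x) hdeg
      exact lt_irrefl _ (h2.trans_le h1)
  refine ⟨⟨SHCProof.hhat Fq x, hSHC, huniq⟩, fun h hh => ?_⟩
  rw [huniq h hh]
  exact hhat_IsHhat
end

section
/- For every x > 0, the polynomial ĥ(x) is the unique highly composite polynomial of its degree: for every monic g ∈ 𝔽_q[t] with deg g ≤ deg ĥ(x) and g ≠ ĥ(x), one has τ(g) < τ(ĥ(x)). -/
open Polynomial

section Aux

open UniqueFactorizationMonoid

variable {Fq : Type} [Field Fq] [DecidableEq Fq]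

lemma mem_nf_monic {f p : Fq[X]} (hp : p ∈ normalizedFactors f) :
    p.Monic ∧ Irreducible p := by
  classical
  have h1 : Irreducible p := irreducible_of_normalized_factor p hp
  have h2 : normalize p = p := normalize_normalized_factor p hp
  exact ⟨h2 ▸ monic_normalize h1.ne_zero, h1⟩

lemma mult_eq_count {p f : Fq[X]} (hp : p.Monic) (hirr : Irreducible p) (hf : f ≠ 0) :
    mult p f = (normalizedFactors f).count p := by
  classical
  have h := UniqueFactorizationMonoid.emultiplicity_eq_count_normalizedFactors hirr hf
  rw [hp.normalize_eq_self] at h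
  exact multiplicity_eq_of_emultiplicity_eq_some h

lemma nf_prod_pow (S : Finset Fq[X]) (hS : ∀ p ∈ S, p.Monic ∧ Irreducible p)
    (e : Fq[X] → ℕ) :
    normalizedFactors (∏ p ∈ S, p ^ e p) = ∑ p ∈ S, Multiset.replicate (e p) p := by
  classical
  induction S using Finset.induction with
  | empty => simp
  | @insert q S hq ih =>
    have hqm := hS q (Finset.mem_insert_self q S)
    rw [Finset.prod_insert hq, Finset.sum_insert hq]
    have h1 : q ^ e q ≠ 0 := pow_ne_zero _ hqm.1.ne_zero
    have h2 : (∏ p ∈ S, p ^ e p) ≠ 0 :=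
      (monic_prod_of_monic S _ (fun p hp => (hS p (Finset.mem_insert_of_mem hp)).1.pow _)).ne_zero
    rw [normalizedFactors_mul h1 h2, normalizedFactors_pow,
      normalizedFactors_irreducible hqm.2, hqm.1.normalize_eq_self,
      ih (fun p hp => hS p (Finset.mem_insert_of_mem hp)), Multiset.nsmul_singleton]

lemma count_nf_prod_pow (S : Finset Fq[X]) (hS : ∀ p ∈ S, p.Monic ∧ Irreducible p)
    (e : Fq[X] → ℕ) {p : Fq[X]} (hp : p ∈ S) :
    (normalizedFactors (∏ q ∈ S, q ^ e q)).count p = e p := by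
  classical
  rw [nf_prod_pow S hS e, Multiset.count_sum', Finset.sum_eq_single p
    (fun q _ hqp => by rw [Multiset.count_replicate, if_neg hqp])
    (fun hnp => absurd hp hnp)]
  rw [Multiset.count_replicate, if_pos rfl]

lemma mem_of_mem_nf_prod_pow (S : Finset Fq[X]) (hS : ∀ p ∈ S, p.Monic ∧ Irreducible p)
    (e : Fq[X] → ℕ) {p : Fq[X]} (hp : p ∈ normalizedFactors (∏ q ∈ S, q ^ e q)) :
    p ∈ S := by
  classical
  rw [nf_prod_pow S hS e, Multiset.mem_sum] at hp
  obtain ⟨q, hq, hpq⟩ := hp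
  rwa [Multiset.eq_of_mem_replicate hpq]

lemma repr_monic {g : Fq[X]} (hg : g.Monic) (S : Finset Fq[X])
    (hsub : (normalizedFactors g).toFinset ⊆ S) :
    g = ∏ p ∈ S, p ^ (normalizedFactors g).count p := by
  classical
  have h0 : g ≠ 0 := hg.ne_zero
  have hm : (normalizedFactors g).prod.Monic := by
    have h := monic_multiset_prod_of_monic (normalizedFactors g) id
      (fun p hp => (mem_nf_monic hp).1)
    simpa using h
  have hprod : (normalizedFactors g).prod = g :=
    Polynomial.eq_of_monic_of_associated hm hg (prod_normalizedFactors h0)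
  conv_lhs => rw [← hprod]
  exact Finset.prod_multiset_count_of_subset _ S hsub

lemma tau_prod_pow (S : Finset Fq[X]) (hS : ∀ p ∈ S, p.Monic ∧ Irreducible p)
    (e : Fq[X] → ℕ) :
    tau (∏ p ∈ S, p ^ e p) = ∏ p ∈ S, (e p + 1) := by
  classical
  set F := ∏ p ∈ S, p ^ e p with hF
  have hFmon : F.Monic := monic_prod_of_monic S _ (fun p hp => (hS p hp).1.pow _)
  set Φ : (∀ p ∈ S, ℕ) → Fq[X] := fun b => ∏ p ∈ S.attach, (p : Fq[X]) ^ b p.1 p.2 with hΦ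
  have hΦcount : ∀ (b : ∀ p ∈ S, ℕ) (p : Fq[X]) (hp : p ∈ S),
      (normalizedFactors (Φ b)).count p = b p hp := by
    intro b p hp
    have hb : Φ b = ∏ p ∈ S, p ^ (if h : p ∈ S then b p h else 0) := by
      rw [hΦ, ← Finset.prod_attach S (fun p => p ^ (if h : p ∈ S then b p h else 0))]
      exact Finset.prod_congr rfl (fun q _ => by rw [dif_pos q.2])
    rw [hb, count_nf_prod_pow S hS _ hp, dif_pos hp]
  set D : Finset Fq[X] := (S.pi fun p => Finset.range (e p + 1)).image Φ with hD
  have hinj : Set.InjOn Φ ↑(S.pi fun p => Finset.range (e p + 1)) := by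
    intro b _ b' _ heq
    funext p hp
    rw [← hΦcount b p hp, ← hΦcount b' p hp, heq]
  have hmem : ∀ d : Fq[X], (d.Monic ∧ d ∣ F) ↔ d ∈ D := by
    intro d
    constructor
    · rintro ⟨hdmon, hdvd⟩
      have hd0 : d ≠ 0 := hdmon.ne_zero
      have hnfle : normalizedFactors d ≤ normalizedFactors F :=
        (dvd_iff_normalizedFactors_le_normalizedFactors hd0 hFmon.ne_zero).1 hdvd
      have hsub : (normalizedFactors d).toFinset ⊆ S := by
        intro p hp
        exact mem_of_mem_nf_prod_pow S hS e
          (Multiset.mem_of_le hnfle (Multiset.mem_toFinset.1 hp))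
      refine Finset.mem_image.2 ⟨fun p _ => (normalizedFactors d).count p, ?_, ?_⟩
      · refine Finset.mem_pi.2 (fun p hp => Finset.mem_range_succ_iff.2 ?_)
        calc (normalizedFactors d).count p ≤ (normalizedFactors F).count p :=
              Multiset.count_le_of_le p hnfle
          _ = e p := count_nf_prod_pow S hS e hp
      · show (∏ p ∈ S.attach, (p : Fq[X]) ^ (normalizedFactors d).count p.1) = d
        rw [Finset.prod_attach S (fun p => p ^ (normalizedFactors d).count p)]
        exact (repr_monic hdmon S hsub).symm
    · intro hd
      obtain ⟨b, hbmem, rfl⟩ := Finset.mem_image.1 hd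
      constructor
      · exact monic_prod_of_monic _ _ (fun p _ => (hS p.1 p.2).1.pow _)
      · have : F = ∏ p ∈ S.attach, (p : Fq[X]) ^ e p.1 :=
          (Finset.prod_attach S (fun p => p ^ e p)).symm
        rw [this]
        refine Finset.prod_dvd_prod_of_dvd _ _ (fun p _ => pow_dvd_pow _ ?_)
        exact Finset.mem_range_succ_iff.1 (Finset.mem_pi.1 hbmem p.1 p.2)
  have hset : {d : Fq[X] | d.Monic ∧ d ∣ F} = ↑D := Set.ext (fun d => by
    simpa using hmem d)
  rw [tau, hset, Set.ncard_coe_finset, hD, Finset.card_image_of_injOn hinj, Finset.card_pi]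
  exact Finset.prod_congr rfl (fun p _ => Finset.card_range _)

omit [DecidableEq Fq] in
lemma natdeg_prod_pow (S : Finset Fq[X]) (hS : ∀ p ∈ S, p.Monic ∧ Irreducible p)
    (e : Fq[X] → ℕ) :
    (∏ p ∈ S, p ^ e p).natDegree = ∑ p ∈ S, e p * p.natDegree := by
  rw [Polynomial.natDegree_prod _ _ (fun p hp => pow_ne_zero _ (hS p hp).1.ne_zero)]
  exact Finset.sum_congr rfl (fun p _ => natDegree_pow p (e p))

end Aux

lemma keyR {c : ℝ} (hc : 1 < c) (a e : ℕ) (ha1 : (a : ℝ) * (c - 1) ≤ 1)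
    (ha2 : 1 < ((a : ℝ) + 1) * (c - 1)) :
    ((e : ℝ) + 1) * c ^ a ≤ ((a : ℝ) + 1) * c ^ e ∧
      (((e : ℝ) + 1) * c ^ a = ((a : ℝ) + 1) * c ^ e → e ≤ a) := by
  have hc0 : (0 : ℝ) < c := lt_trans one_pos hc
  have hpow : ∀ n : ℕ, (0 : ℝ) < c ^ n := fun n => pow_pos hc0 n
  have down : ∀ m : ℕ, m ≤ a → (((a - m : ℕ) : ℝ) + 1) * c ^ m ≤ (a : ℝ) + 1 := by
    intro m
    induction m with
    | zero => intro _; simp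
    | succ k ih =>
      intro hk
      have hk' : k ≤ a := Nat.le_of_succ_le hk
      have ihk := ih hk'
      have hsub : ((a - (k + 1) : ℕ) : ℝ) + 1 = ((a - k : ℕ) : ℝ) := by
        have h : a - k = (a - (k + 1)) + 1 := by omega
        rw [h]; push_cast; ring
      have hle : ((a - k : ℕ) : ℝ) ≤ (a : ℝ) := by exact_mod_cast Nat.sub_le a k
      have hstep : ((a - k : ℕ) : ℝ) * c ≤ ((a - k : ℕ) : ℝ) + 1 := by nlinarith
      calc (((a - (k + 1) : ℕ) : ℝ) + 1) * c ^ (k + 1)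
          = (((a - k : ℕ) : ℝ) * c) * c ^ k := by rw [hsub, pow_succ]; ring
        _ ≤ (((a - k : ℕ) : ℝ) + 1) * c ^ k := by
            exact mul_le_mul_of_nonneg_right hstep (hpow k).le
        _ ≤ (a : ℝ) + 1 := ihk
  have hle : ∀ e : ℕ, e ≤ a → ((e : ℝ) + 1) * c ^ a ≤ ((a : ℝ) + 1) * c ^ e := by
    intro e he
    have h1 := down (a - e) (Nat.sub_le a e)
    have h2 : a - (a - e) = e := by omega
    rw [h2] at h1
    have h3 := mul_le_mul_of_nonneg_right h1 (hpow e).le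
    rwa [mul_assoc, ← pow_add, Nat.sub_add_cancel he] at h3
  have hup : ∀ e : ℕ, a < e → ((e : ℝ) + 1) * c ^ a < ((a : ℝ) + 1) * c ^ e := by
    intro e he
    induction e, he using Nat.le_induction with
    | base =>
      have h2 : (a : ℝ) + 1 + 1 < ((a : ℝ) + 1) * c := by nlinarith
      rw [pow_succ]
      push_cast
      nlinarith [hpow a]
    | succ n hn ihn =>
      have hn' : (a : ℝ) + 1 ≤ (n : ℝ) := by exact_mod_cast hn
      have hstep : ((n : ℝ) + 2) ≤ c * ((n : ℝ) + 1) := by nlinarith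
      rw [pow_succ]
      push_cast
      push_cast at ihn
      nlinarith [hpow a, hpow n, mul_lt_mul_of_pos_right ihn hc0,
        mul_le_mul_of_nonneg_right hstep (hpow a).le]
  refine ⟨?_, ?_⟩
  · rcases le_or_gt e a with h | h
    · exact hle e h
    · exact (hup e h).le
  · intro heq
    by_contra hgt
    exact absurd heq (ne_of_lt (hup e (lt_of_not_ge hgt)))

lemma rpow_sum_eq {α : Type*} (q : ℝ) (hq : 0 < q) (S : Finset α) (t : α → ℝ) :
    q ^ (∑ p ∈ S, t p) = ∏ p ∈ S, q ^ t p := by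
  classical
  induction S using Finset.induction with
  | empty => simp
  | @insert a S ha ih =>
    rw [Finset.sum_insert ha, Finset.prod_insert ha, Real.rpow_add hq, ih]

/-- `ĥ(x)` is the unique highly composite polynomial of its degree. -/
theorem hhat_unique_highly_composite {Fq : Type} [Field Fq] [Fintype Fq]
    (x : ℝ) (hx : 0 < x) (h : Fq[X]) (hh : IsHhat x h) :
    ∀ g : Fq[X], g.Monic → g.natDegree ≤ h.natDegree → g ≠ h → tau g < tau h := by
  classical
  obtain ⟨hmon, hmult⟩ := hh
  intro g hg hdeg hne
  have hg0 : g ≠ 0 := hg.ne_zero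
  have hh0 : h ≠ 0 := hmon.ne_zero
  set P : Finset Fq[X] :=
    (UniqueFactorizationMonoid.normalizedFactors g).toFinset ∪
      (UniqueFactorizationMonoid.normalizedFactors h).toFinset with hP
  have hPmi : ∀ p ∈ P, p.Monic ∧ Irreducible p := by
    intro p hp
    rcases Finset.mem_union.1 hp with hp | hp <;>
      exact mem_nf_monic (Multiset.mem_toFinset.1 hp)
  set e : Fq[X] → ℕ := fun p => (UniqueFactorizationMonoid.normalizedFactors g).count p with he
  set a : Fq[X] → ℕ := fun p => (UniqueFactorizationMonoid.normalizedFactors h).count p with haa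
  have hgrep : g = ∏ p ∈ P, p ^ e p := repr_monic hg P Finset.subset_union_left
  have hhrep : h = ∏ p ∈ P, p ^ a p := repr_monic hmon P Finset.subset_union_right
  have htg : tau g = ∏ p ∈ P, (e p + 1) := by
    conv_lhs => rw [hgrep]
    exact tau_prod_pow P hPmi e
  have hth : tau h = ∏ p ∈ P, (a p + 1) := by
    conv_lhs => rw [hhrep]
    exact tau_prod_pow P hPmi a
  have hdg : g.natDegree = ∑ p ∈ P, e p * p.natDegree := by
    conv_lhs => rw [hgrep]
    exact natdeg_prod_pow P hPmi e
  have hdh : h.natDegree = ∑ p ∈ P, a p * p.natDegree := by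
    conv_lhs => rw [hhrep]
    exact natdeg_prod_pow P hPmi a
  set q : ℝ := (Fintype.card Fq : ℝ) with hq
  have hq1 : (1 : ℝ) < q := by
    rw [hq]; exact_mod_cast Fintype.one_lt_card
  have hq0 : (0 : ℝ) < q := lt_trans one_pos hq1
  set c : Fq[X] → ℝ := fun p => q ^ ((p.natDegree : ℝ) / x) with hc
  have hc1 : ∀ p ∈ P, 1 < c p := by
    intro p hp
    have hd : 0 < p.natDegree := (hPmi p hp).2.natDegree_pos
    rw [hc]
    refine (Real.one_lt_rpow_iff_of_pos hq0).2 (Or.inl ⟨hq1, ?_⟩)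
    positivity
  have hcpos : ∀ p ∈ P, (0 : ℝ) < c p := fun p hp => lt_trans one_pos (hc1 p hp)
  have ha_eq : ∀ p ∈ P, a p = ⌊1 / (c p - 1)⌋₊ := by
    intro p hp
    have h1 := hmult p (hPmi p hp).1 (hPmi p hp).2
    rw [mult_eq_count (hPmi p hp).1 (hPmi p hp).2 hh0] at h1
    rw [haa]
    exact h1
  have key : ∀ p ∈ P,
      ((e p : ℝ) + 1) * c p ^ a p ≤ ((a p : ℝ) + 1) * c p ^ e p ∧
        (((e p : ℝ) + 1) * c p ^ a p = ((a p : ℝ) + 1) * c p ^ e p → e p ≤ a p) := by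
    intro p hp
    have hcp := hc1 p hp
    have hcm : (0 : ℝ) < c p - 1 := sub_pos.2 hcp
    have hfl : (a p : ℝ) ≤ 1 / (c p - 1) := by
      rw [ha_eq p hp]; exact Nat.floor_le (by positivity)
    have hfl2 : 1 / (c p - 1) < (a p : ℝ) + 1 := by
      rw [ha_eq p hp]; exact Nat.lt_floor_add_one _
    exact keyR hcp (a p) (e p) ((le_div_iff₀ hcm).1 hfl) ((div_lt_iff₀ hcm).1 hfl2)
  -- product identities
  have hprod : ∀ t : Fq[X] → ℕ, ∏ p ∈ P, c p ^ t p =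
      q ^ (((∑ p ∈ P, t p * p.natDegree : ℕ) : ℝ) / x) := by
    intro t
    have h1 : ∀ p ∈ P, c p ^ t p = q ^ (((t p * p.natDegree : ℕ) : ℝ) / x) := by
      intro p hp
      rw [hc, ← Real.rpow_natCast (q ^ ((p.natDegree : ℝ) / x)) (t p),
        ← Real.rpow_mul hq0.le]
      congr 1
      push_cast
      ring
    rw [Finset.prod_congr rfl h1]
    rw [← rpow_sum_eq q hq0]
    congr 1
    rw [← Finset.sum_div]
    congr 1
    push_cast
    rfl
  have hprod_e : ∏ p ∈ P, c p ^ e p = q ^ ((g.natDegree : ℝ) / x) := by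
    rw [hprod e, ← hdg]
  have hprod_a : ∏ p ∈ P, c p ^ a p = q ^ ((h.natDegree : ℝ) / x) := by
    rw [hprod a, ← hdh]
  have hL : (tau g : ℝ) * q ^ ((h.natDegree : ℝ) / x) =
      ∏ p ∈ P, (((e p : ℝ) + 1) * c p ^ a p) := by
    rw [htg, ← hprod_a, Finset.prod_mul_distrib]
    push_cast
    ring
  have hR : (tau h : ℝ) * q ^ ((g.natDegree : ℝ) / x) =
      ∏ p ∈ P, (((a p : ℝ) + 1) * c p ^ e p) := by
    rw [hth, ← hprod_e, Finset.prod_mul_distrib]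
    push_cast
    ring
  have hqpow : ∀ n : ℕ, (0 : ℝ) < q ^ ((n : ℝ) / x) := fun n => Real.rpow_pos_of_pos hq0 _
  have hτh : (0 : ℝ) < (tau h : ℝ) := by
    rw [hth]
    push_cast
    exact Finset.prod_pos (fun p _ => by positivity)
  suffices hlt : (tau g : ℝ) * q ^ ((h.natDegree : ℝ) / x) <
      (tau h : ℝ) * q ^ ((h.natDegree : ℝ) / x) by
    have := (mul_lt_mul_iff_of_pos_right (hqpow h.natDegree)).1 hlt
    exact_mod_cast this
  have hqmono : q ^ ((g.natDegree : ℝ) / x) ≤ q ^ ((h.natDegree : ℝ) / x) := by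
    refine (Real.rpow_le_rpow_left_iff hq1).2 ((div_le_div_iff_of_pos_right hx).2 ?_)
    exact_mod_cast hdeg
  by_cases hall : ∀ p ∈ P, ((e p : ℝ) + 1) * c p ^ a p = ((a p : ℝ) + 1) * c p ^ e p
  · have hlep : ∀ p ∈ P, e p ≤ a p := fun p hp => (key p hp).2 (hall p hp)
    have hex : ∃ p ∈ P, e p < a p := by
      by_contra hno
      push_neg at hno
      apply hne
      rw [hgrep, hhrep]
      exact Finset.prod_congr rfl (fun p hp =>
        by rw [le_antisymm (hlep p hp) (hno p hp)])
    obtain ⟨p0, hp0, hp0lt⟩ := hex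
    have hdlt : g.natDegree < h.natDegree := by
      rw [hdg, hdh]
      refine Finset.sum_lt_sum (fun p hp => Nat.mul_le_mul_right _ (hlep p hp)) ⟨p0, hp0, ?_⟩
      exact (Nat.mul_lt_mul_right (hPmi p0 hp0).2.natDegree_pos).2 hp0lt
    have hqlt : q ^ ((g.natDegree : ℝ) / x) < q ^ ((h.natDegree : ℝ) / x) := by
      refine (Real.rpow_lt_rpow_left_iff hq1).2 ((div_lt_div_iff_of_pos_right hx).2 ?_)
      exact_mod_cast hdlt
    have hEq : (tau g : ℝ) * q ^ ((h.natDegree : ℝ) / x) =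
        (tau h : ℝ) * q ^ ((g.natDegree : ℝ) / x) := by
      rw [hL, hR]
      exact Finset.prod_congr rfl hall
    rw [hEq]
    exact mul_lt_mul_of_pos_left hqlt hτh
  · push_neg at hall
    obtain ⟨p0, hp0, hne0⟩ := hall
    have hstrict : ∏ p ∈ P, (((e p : ℝ) + 1) * c p ^ a p) <
        ∏ p ∈ P, (((a p : ℝ) + 1) * c p ^ e p) := by
      refine Finset.prod_lt_prod (fun p hp => ?_) (fun p hp => (key p hp).1)
        ⟨p0, hp0, lt_of_le_of_ne (key p0 hp0).1 hne0⟩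
      have := hcpos p hp
      positivity
    calc (tau g : ℝ) * q ^ ((h.natDegree : ℝ) / x)
        = ∏ p ∈ P, (((e p : ℝ) + 1) * c p ^ a p) := hL
      _ < ∏ p ∈ P, (((a p : ℝ) + 1) * c p ^ e p) := hstrict
      _ = (tau h : ℝ) * q ^ ((g.natDegree : ℝ) / x) := hR.symm
      _ ≤ (tau h : ℝ) * q ^ ((h.natDegree : ℝ) / x) :=
          mul_le_mul_of_nonneg_left hqmono hτh.le
end

section
/- Let s, r be positive integers and x = s·log q / log(1 + 1/r). Then a monic polynomial h ∈ 𝔽_q[t] is x-semi-superior highly composite if and only if h = ĥ(x)/(P_{i_1}···P_{i_v}) for some 0 ≤ v ≤ π(s) and some distinct monic irreducible polynomials P_{i_1}, …, P_{i_v} of degree s; such an h has degree deg ĥ(x) − v·s, and there are exactly 2^{π(s)} x-SSHC polynomials. -/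
open Polynomial

/-- `h` is an `x`-semi-superior highly composite polynomial. -/
noncomputable def IsSSHC {Fq : Type} [Field Fq] [Fintype Fq] (x : ℝ) (h : Fq[X]) : Prop :=
  h.Monic ∧ ∀ f : Fq[X], f.Monic →
    (tau f : ℝ) * (Fintype.card Fq : ℝ) ^ (-(f.natDegree : ℝ) / x) ≤
    (tau h : ℝ) * (Fintype.card Fq : ℝ) ^ (-(h.natDegree : ℝ) / x)


open UniqueFactorizationMonoid

namespace SSHCAux


noncomputable def G (y : ℝ) (e : ℕ) : ℝ := (e + 1) / y ^ e

lemma G_pos {y : ℝ} (hy : 0 < y) (e : ℕ) : 0 < G y e := by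
  unfold G; positivity

section CoreG

variable {y : ℝ} (hy : 1 < y)
include hy

lemma step_le {e : ℕ} : G y e ≤ G y (e + 1) ↔ ((e : ℝ) + 1) * (y - 1) ≤ 1 := by
  have hy0 : (0:ℝ) < y := lt_trans one_pos hy
  have hpe : (0:ℝ) < y ^ e := pow_pos hy0 e
  unfold G
  rw [div_le_div_iff₀ hpe (pow_pos hy0 (e+1)), pow_succ]
  push_cast
  constructor <;> intro h <;> nlinarith

lemma step_lt {e : ℕ} : G y e < G y (e + 1) ↔ ((e : ℝ) + 1) * (y - 1) < 1 := by
  have hy0 : (0:ℝ) < y := lt_trans one_pos hy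
  have hpe : (0:ℝ) < y ^ e := pow_pos hy0 e
  unfold G
  rw [div_lt_div_iff₀ hpe (pow_pos hy0 (e+1)), pow_succ]
  push_cast
  constructor <;> intro h <;> nlinarith

lemma decr {e : ℕ} (he : ⌊1 / (y - 1)⌋₊ ≤ e) : G y (e + 1) < G y e := by
  have hy1 : (0:ℝ) < y - 1 := by linarith
  have hm : 1 / (y - 1) < (⌊1 / (y - 1)⌋₊ : ℝ) + 1 := Nat.lt_floor_add_one _
  have : 1 / (y - 1) < (e : ℝ) + 1 := by
    refine hm.trans_le ?_
    have : (⌊1 / (y - 1)⌋₊ : ℝ) ≤ (e : ℝ) := by exact_mod_cast he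
    linarith
  have h1 : 1 < ((e : ℝ) + 1) * (y - 1) := by
    rw [div_lt_iff₀ hy1] at this; linarith
  exact lt_of_not_ge (fun h => by linarith [(step_le hy).mp h])


lemma gt_lt {e : ℕ} (he : ⌊1 / (y - 1)⌋₊ < e) : G y e < G y ⌊1 / (y - 1)⌋₊ := by
  set a := ⌊1 / (y - 1)⌋₊ with ha
  induction e with
  | zero => omega
  | succ n ih =>
    rcases Nat.lt_or_ge a n with h | h
    · exact (decr hy (le_of_lt h)).trans (ih h)
    · have : n = a := le_antisymm h (by omega)
      subst this
      exact decr hy le_rfl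

lemma incr_le {e : ℕ} (he : e ≤ ⌊1 / (y - 1)⌋₊) : G y e ≤ G y ⌊1 / (y - 1)⌋₊ := by
  set a := ⌊1 / (y - 1)⌋₊ with ha
  have hy1 : (0:ℝ) < y - 1 := by linarith
  have key : ∀ k : ℕ, ∀ e : ℕ, e + k = a → G y e ≤ G y a := by
    intro k
    induction k with
    | zero => intro e h; simp at h; rw [h]
    | succ n ih =>
      intro e h
      have hstep : G y e ≤ G y (e + 1) := by
        rw [step_le hy]
        have h1 : (e:ℝ) + 1 ≤ (a:ℝ) := by exact_mod_cast Nat.succ_le_of_lt (by omega)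
        have h2 : (a:ℝ) ≤ 1 / (y - 1) := Nat.floor_le (by positivity)
        have := (le_div_iff₀ hy1).mp (h1.trans h2)
        linarith
      exact hstep.trans (ih (e+1) (by omega))
  exact key (a - e) e (by omega)

lemma lt_pred {e : ℕ} (he : e + 1 < ⌊1 / (y - 1)⌋₊) : G y e < G y ⌊1 / (y - 1)⌋₊ := by
  set a := ⌊1 / (y - 1)⌋₊ with ha
  have hy1 : (0:ℝ) < y - 1 := by linarith
  have hstep : G y e < G y (e + 1) := by
    rw [step_lt hy]
    have h1 : (e:ℝ) + 1 < (a:ℝ) := by exact_mod_cast he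
    have h2 : (a:ℝ) ≤ 1 / (y - 1) := Nat.floor_le (by positivity)
    have := (lt_div_iff₀ hy1).mp (h1.trans_le h2)
    linarith
  exact hstep.trans_le (incr_le hy (le_of_lt he))

theorem G_le : ∀ e : ℕ, G y e ≤ G y ⌊1 / (y - 1)⌋₊ := by
  intro e
  rcases le_or_gt e ⌊1 / (y - 1)⌋₊ with h | h
  · exact incr_le hy h
  · exact le_of_lt (gt_lt hy h)

theorem G_eq_iff {e : ℕ} :
    G y e = G y ⌊1 / (y - 1)⌋₊ ↔
      e = ⌊1 / (y - 1)⌋₊ ∨ ((⌊1 / (y - 1)⌋₊ : ℝ) * (y - 1) = 1 ∧ e + 1 = ⌊1 / (y - 1)⌋₊) := by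
  set a := ⌊1 / (y - 1)⌋₊ with ha
  have hy1 : (0:ℝ) < y - 1 := by linarith
  constructor
  · intro h
    rcases lt_trichotomy e a with hlt | heq | hgt
    · rcases Nat.lt_or_ge (e+1) a with h1 | h1
      · exact absurd h (ne_of_lt (lt_pred hy h1))
      · have he1 : e + 1 = a := by omega
        right
        refine ⟨?_, he1⟩
        by_contra hne
        have hstep : G y e < G y (e + 1) := by
          rw [step_lt hy]
          have h2 : (a:ℝ) ≤ 1 / (y - 1) := Nat.floor_le (by positivity)
          have h3 : ((e:ℝ) + 1) = (a:ℝ) := by exact_mod_cast he1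
          rcases lt_or_eq_of_le ((le_div_iff₀ hy1).mp (h3.le.trans h2)) with hc | hc
          · linarith
          · exact absurd (by rw [← h3]; linarith) hne
        rw [he1] at hstep
        exact absurd h (ne_of_lt hstep)
    · exact Or.inl heq
    · exact absurd h (ne_of_lt (gt_lt hy hgt))
  · rintro (rfl | ⟨htie, he1⟩)
    · rfl
    · have h3 : ((e:ℝ) + 1) = (a:ℝ) := by exact_mod_cast he1
      have hstep : G y e = G y (e + 1) := by
        have hle : G y e ≤ G y (e+1) := by rw [step_le hy, h3, htie]
        have hge : ¬ G y e < G y (e+1) := by rw [step_lt hy, h3, htie]; simp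
        exact le_antisymm hle (not_lt.mp hge)
      rw [hstep, he1]


end CoreG

section Arith

variable {s r : ℕ} (hs : 0 < s) (hr : 0 < r)

noncomputable def th (r : ℕ) : ℝ := 1 + 1 / (r : ℝ)

lemma th_gt_one (hr : 0 < r) : 1 < th r := by
  unfold th
  have : (0:ℝ) < 1 / (r:ℝ) := by positivity
  linarith

noncomputable def yv (s r d : ℕ) : ℝ := th r ^ ((d : ℝ) / (s : ℝ))

include hs hr in
lemma yv_gt_one {d : ℕ} (hd : 0 < d) : 1 < yv s r d := by
  have hds : (0:ℝ) < (d:ℝ)/(s:ℝ) := div_pos (by exact_mod_cast hd) (by exact_mod_cast hs)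
  exact Real.one_lt_rpow_iff_of_pos (by linarith [th_gt_one hr]) |>.mpr (Or.inl ⟨th_gt_one hr, hds⟩)

include hs hr in
lemma yv_s_eq : yv s r s = th r := by
  unfold yv
  rw [div_self (by exact_mod_cast hs.ne' : (s:ℝ) ≠ 0), Real.rpow_one]

include hr in
lemma th_sub_one : th r - 1 = 1 / (r : ℝ) := by unfold th; ring

include hs hr in
lemma floor_s : ⌊1 / (yv s r s - 1)⌋₊ = r := by
  rw [yv_s_eq hs hr, th_sub_one hr, one_div_one_div, Nat.floor_natCast]

include hs hr in
lemma tie_s : (r : ℝ) * (yv s r s - 1) = 1 := by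
  rw [yv_s_eq hs hr, th_sub_one hr]
  field_simp

include hs hr in
lemma yv_pow_s {d : ℕ} : yv s r d ^ s = th r ^ d := by
  unfold yv
  rw [← Real.rpow_natCast (th r ^ ((d:ℝ)/(s:ℝ))) s, ← Real.rpow_mul (by unfold th; positivity),
    div_mul_cancel₀ _ (by exact_mod_cast hs.ne' : (s:ℝ) ≠ 0), Real.rpow_natCast]

include hs hr in
lemma no_tie {d m : ℕ} (hd : 0 < d) (hds : d ≠ s) :
    ¬ ((m : ℝ) * (yv s r d - 1) = 1) := by
  intro htie
  have hy1 : 1 < yv s r d := yv_gt_one hs hr hd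
  have hm0 : 0 < m := by
    rcases Nat.eq_zero_or_pos m with rfl | h
    · simp at htie
    · exact h
  have hmR : (0:ℝ) < (m:ℝ) := by exact_mod_cast hm0
  have hyval : yv s r d = ((m:ℝ) + 1) / (m:ℝ) := by
    field_simp
    nlinarith [htie]
  -- raise to the s-th power
  have hpow : (((m:ℝ) + 1) / (m:ℝ)) ^ s = (((r:ℝ) + 1) / (r:ℝ)) ^ d := by
    rw [← hyval, yv_pow_s hs hr]
    congr 1
    unfold th
    field_simp
  have hrR : (0:ℝ) < (r:ℝ) := by exact_mod_cast hr
  have hnat : ((m:ℝ) + 1) ^ s * (r:ℝ) ^ d = ((r:ℝ) + 1) ^ d * (m:ℝ) ^ s := by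
    rw [div_pow, div_pow, div_eq_div_iff (by positivity) (by positivity)] at hpow
    linarith [hpow]
  have hN : (m + 1) ^ s * r ^ d = (r + 1) ^ d * m ^ s := by
    exact_mod_cast hnat
  -- coprimality gives m ^ s = r ^ d
  have hcopm : Nat.Coprime m (m + 1) := by simp [Nat.coprime_self_add_right]
  have hcopr : Nat.Coprime r (r + 1) := by simp [Nat.coprime_self_add_right]
  have hcop1 : Nat.Coprime (m ^ s) ((m + 1) ^ s) := hcopm.pow s s
  have hcop2 : Nat.Coprime (r ^ d) ((r + 1) ^ d) := hcopr.pow d d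
  have hdvd1 : m ^ s ∣ r ^ d := by
    have h0 : m ^ s ∣ (m + 1) ^ s * r ^ d := by rw [hN]; exact dvd_mul_left _ _
    exact hcop1.dvd_of_dvd_mul_left h0
  have hdvd2 : r ^ d ∣ m ^ s := by
    have h0 : r ^ d ∣ (r + 1) ^ d * m ^ s := by rw [← hN]; exact dvd_mul_left _ _
    exact hcop2.dvd_of_dvd_mul_left h0
  have heq : m ^ s = r ^ d := Nat.dvd_antisymm hdvd1 hdvd2
  -- now derive a contradiction
  have hth : 1 < th r := th_gt_one hr
  rcases lt_or_gt_of_ne hds with hlt | hgt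
  · -- d < s : yv < th, so 1/m < 1/r, r < m; but m^s = r^d ≤ r^s so m ≤ r
    have hylt : yv s r d < th r := by
      have : yv s r d < th r ^ (1:ℝ) := by
        apply Real.rpow_lt_rpow_of_exponent_lt hth
        rw [div_lt_one (by exact_mod_cast hs : (0:ℝ) < (s:ℝ))]
        exact_mod_cast hlt
      rwa [Real.rpow_one] at this
    have hrm : r < m := by
      have hdiv : 1 / (m:ℝ) < 1 / (r:ℝ) := by
        have := hylt
        rw [hyval] at this
        unfold th at this
        have h2 : ((m:ℝ)+1)/(m:ℝ) = 1 + 1/(m:ℝ) := by field_simp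
        rw [h2] at this
        linarith
      have h3 := mul_lt_mul_of_pos_right hdiv (mul_pos hmR hrR)
      have h4 : 1/(m:ℝ)*((m:ℝ)*(r:ℝ)) = (r:ℝ) := by field_simp
      have h5 : 1/(r:ℝ)*((m:ℝ)*(r:ℝ)) = (m:ℝ) := by field_simp
      rw [h4, h5] at h3
      exact_mod_cast h3
    have hle : m ≤ r := by
      have h1 : m ^ s ≤ r ^ s := by
        rw [heq]; exact Nat.pow_le_pow_right hr (le_of_lt hlt)
      exact (Nat.pow_le_pow_iff_left hs.ne').mp h1
    omega
  · -- d > s : yv > th, so m < r; but m^s = r^d ≥ r^s so m ≥ r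
    have hygt : th r < yv s r d := by
      have : th r ^ (1:ℝ) < yv s r d := by
        apply Real.rpow_lt_rpow_of_exponent_lt hth
        rw [lt_div_iff₀ (by exact_mod_cast hs : (0:ℝ) < (s:ℝ))]
        simpa using (by exact_mod_cast hgt : (s:ℝ) < (d:ℝ))
      rwa [Real.rpow_one] at this
    have hmr : m < r := by
      have hdiv : 1 / (r:ℝ) < 1 / (m:ℝ) := by
        have := hygt
        rw [hyval] at this
        unfold th at this
        have h2 : ((m:ℝ)+1)/(m:ℝ) = 1 + 1/(m:ℝ) := by field_simp
        rw [h2] at this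
        linarith
      have h3 := mul_lt_mul_of_pos_right hdiv (mul_pos hmR hrR)
      have h4 : 1/(m:ℝ)*((m:ℝ)*(r:ℝ)) = (r:ℝ) := by field_simp
      have h5 : 1/(r:ℝ)*((m:ℝ)*(r:ℝ)) = (m:ℝ) := by field_simp
      rw [h4, h5] at h3
      exact_mod_cast h3
    have hge : r ≤ m := by
      have h1 : r ^ s ≤ m ^ s := by
        rw [heq]; exact Nat.pow_le_pow_right hr (le_of_lt hgt)
      exact (Nat.pow_le_pow_iff_left hs.ne').mp h1
    omega

include hs hr in
lemma floor_eq_zero_of_large {d : ℕ} (hd : (⌈(s:ℝ) * Real.log 2 / Real.log (th r)⌉₊ : ℕ) < d) :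
    ⌊1 / (yv s r d - 1)⌋₊ = 0 := by
  have hth : 1 < th r := th_gt_one hr
  have hlogth : 0 < Real.log (th r) := Real.log_pos hth
  have h2y : 2 < yv s r d := by
    rw [show yv s r d = th r ^ ((d:ℝ)/(s:ℝ)) from rfl]
    rw [Real.lt_rpow_iff_log_lt (by norm_num) (by linarith)]
    have hB : (s:ℝ) * Real.log 2 / Real.log (th r) < (d:ℝ) := by
      calc (s:ℝ) * Real.log 2 / Real.log (th r)
          ≤ (⌈(s:ℝ) * Real.log 2 / Real.log (th r)⌉₊ : ℝ) := Nat.le_ceil _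
        _ < (d:ℝ) := by exact_mod_cast hd
    have hsR : (0:ℝ) < (s:ℝ) := by exact_mod_cast hs
    rw [div_mul_eq_mul_div, lt_div_iff₀ hsR]
    calc Real.log 2 * (s:ℝ) = (s:ℝ) * Real.log 2 := by ring
      _ < (d:ℝ) * Real.log (th r) := by
          rw [div_lt_iff₀ hlogth] at hB; linarith
  rw [Nat.floor_eq_zero]
  rw [div_lt_one (by linarith)]
  linarith

end Arith


section Poly


variable {Fq : Type} [Field Fq] [DecidableEq Fq]

lemma monic_of_normalized_factor {f b : Fq[X]} (hb : b ∈ normalizedFactors f) : b.Monic := by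
  have hirr : Irreducible b := irreducible_of_normalized_factor b hb
  have hnorm : normalize b = b := normalize_normalized_factor b hb
  rw [← hnorm]
  exact Polynomial.monic_normalize hirr.ne_zero

lemma monic_msprod {t : Multiset Fq[X]} (h : ∀ b ∈ t, b.Monic) : t.prod.Monic := by
  have := Polynomial.monic_multiset_prod_of_monic t id (fun b hb => h b hb)
  rwa [Multiset.map_id] at this

lemma prod_normalizedFactors {f : Fq[X]} (hf : f.Monic) :
    (normalizedFactors f).prod = f := by
  refine Polynomial.eq_of_monic_of_associated ?_ hf (UniqueFactorizationMonoid.prod_normalizedFactors hf.ne_zero)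
  exact monic_msprod (fun b hb => monic_of_normalized_factor hb)

lemma mult_eq_count [DecidableEq Fq[X]] {p f : Fq[X]} (hp : p.Monic) (hip : Irreducible p)
    (hf : f.Monic) : mult p f = (normalizedFactors f).count p := by
  have hfin : FiniteMultiplicity p f :=
    FiniteMultiplicity.of_not_isUnit hip.not_isUnit hf.ne_zero
  have h1 := emultiplicity_eq_count_normalizedFactors hip hf.ne_zero
  rw [hp.normalize_eq_self] at h1
  have h2 := hfin.emultiplicity_eq_multiplicity
  rw [h2] at h1
  exact_mod_cast h1

/-- Extensionality by multiplicities. -/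
lemma monic_ext {f g : Fq[X]} (hf : f.Monic) (hg : g.Monic)
    (h : ∀ p : Fq[X], p.Monic → Irreducible p → mult p f = mult p g) : f = g := by
  classical
  have hnf : normalizedFactors f = normalizedFactors g := by
    ext b
    by_cases hb : b.Monic ∧ Irreducible b
    · rw [← mult_eq_count hb.1 hb.2 hf, ← mult_eq_count hb.1 hb.2 hg, h b hb.1 hb.2]
    · rw [Multiset.count_eq_zero_of_notMem, Multiset.count_eq_zero_of_notMem]
      · intro hmem
        exact hb ⟨monic_of_normalized_factor hmem, irreducible_of_normalized_factor b hmem⟩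
      · intro hmem
        exact hb ⟨monic_of_normalized_factor hmem, irreducible_of_normalized_factor b hmem⟩
  rw [← prod_normalizedFactors hf, ← prod_normalizedFactors hg, hnf]

lemma tau_formula [DecidableEq Fq[X]] {f : Fq[X]} (hf : f.Monic) :
    tau f = ∏ p ∈ (normalizedFactors f).toFinset, ((normalizedFactors f).count p + 1) := by
  have hset : {d : Fq[X] | d.Monic ∧ d ∣ f} =
      Multiset.prod '' ↑(Finset.Iic (normalizedFactors f)) := by
    ext d
    simp only [Set.mem_setOf_eq, Set.mem_image, Finset.coe_Iic, Set.mem_Iic]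
    constructor
    · rintro ⟨hdm, hdvd⟩
      refine ⟨normalizedFactors d, ?_, prod_normalizedFactors hdm⟩
      exact (dvd_iff_normalizedFactors_le_normalizedFactors hdm.ne_zero hf.ne_zero).mp hdvd
    · rintro ⟨t, hle, rfl⟩
      have hmem : ∀ b ∈ t, b ∈ normalizedFactors f := fun b hb => Multiset.mem_of_le hle hb
      constructor
      · exact monic_msprod (fun b hb => monic_of_normalized_factor (hmem b hb))
      · calc t.prod ∣ (normalizedFactors f).prod := Multiset.prod_dvd_prod_of_le hle
          _ = f := prod_normalizedFactors hf
  have hinj : Set.InjOn Multiset.prod ((Finset.Iic (normalizedFactors f) : Finset (Multiset Fq[X])) : Set (Multiset Fq[X])) := by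
    intro t₁ h₁ t₂ h₂ heq
    simp only [Finset.coe_Iic, Set.mem_Iic] at h₁ h₂
    have key : ∀ t : Multiset Fq[X], t ≤ normalizedFactors f → normalizedFactors t.prod = t := by
      intro t ht
      rw [normalizedFactors_prod_eq _ (fun b hb =>
        irreducible_of_normalized_factor b (Multiset.mem_of_le ht hb))]
      rw [Multiset.map_congr rfl (fun b hb =>
        normalize_normalized_factor b (Multiset.mem_of_le ht hb))]
      simp
    rw [← key t₁ h₁, ← key t₂ h₂, heq]
  rw [tau, hset, Set.ncard_image_of_injOn hinj, Set.ncard_coe_finset, Multiset.card_Iic]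

lemma natDegree_formula [DecidableEq Fq[X]] {f : Fq[X]} (hf : f.Monic) :
    f.natDegree = ∑ p ∈ (normalizedFactors f).toFinset,
      (normalizedFactors f).count p * p.natDegree := by
  conv_lhs => rw [← prod_normalizedFactors hf]
  rw [Polynomial.natDegree_multiset_prod_of_monic _
    (fun b hb => monic_of_normalized_factor hb)]
  rw [Finset.sum_multiset_map_count]
  simp [smul_eq_mul]

/-- Multiplicities in a product of powers of distinct monic irreducibles. -/
lemma mult_prod_pow [DecidableEq Fq[X]] (T : Finset Fq[X]) (e : Fq[X] → ℕ)
    (hT : ∀ p ∈ T, p.Monic ∧ Irreducible p) {p₀ : Fq[X]} (hp₀ : p₀.Monic)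
    (hip₀ : Irreducible p₀) :
    mult p₀ (∏ p ∈ T, p ^ e p) = if p₀ ∈ T then e p₀ else 0 := by
  set M : Multiset Fq[X] := T.val.bind (fun p => Multiset.replicate (e p) p) with hM
  have hMmem : ∀ b ∈ M, b ∈ T := by
    intro b hb
    rw [hM, Multiset.mem_bind] at hb
    obtain ⟨a, ha, hb⟩ := hb
    rw [Multiset.eq_of_mem_replicate hb]
    exact ha
  have hprod : M.prod = ∏ p ∈ T, p ^ e p := by
    rw [hM, Multiset.prod_bind]
    rw [Finset.prod_eq_multiset_prod]
    congr 1
    exact Multiset.map_congr rfl (fun p _ => Multiset.prod_replicate _ _)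
  have hmonic : (∏ p ∈ T, p ^ e p).Monic :=
    Polynomial.monic_prod_of_monic _ _ (fun p hp => ((hT p hp).1).pow _)
  rw [mult_eq_count hp₀ hip₀ hmonic, ← hprod]
  rw [normalizedFactors_prod_eq _ (fun b hb => (hT b (hMmem b hb)).2)]
  rw [Multiset.map_congr rfl (fun b hb => ((hT b (hMmem b hb)).1).normalize_eq_self)]
  rw [Multiset.map_id']
  rw [hM, Multiset.count_bind]
  have : ∀ p ∈ T.val, (Multiset.replicate (e p) p).count p₀ = if p₀ = p then e p else 0 := by
    intro p _; rw [Multiset.count_replicate]; simp [eq_comm]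
  rw [Multiset.map_congr rfl this]
  have h2 : (T.val.map fun p => if p₀ = p then e p else 0).sum
      = ∑ p ∈ T, if p₀ = p then e p else 0 := by
    rw [Finset.sum_eq_multiset_sum]
  rw [h2, Finset.sum_ite_eq]



end Poly

section Global

variable {Fq : Type} [Field Fq] [DecidableEq Fq] [Fintype Fq]

/-- the exponent value `a_d`. -/
noncomputable def aF (s r d : ℕ) : ℕ := ⌊1 / (yv s r d - 1)⌋₊

lemma aF_s (s r : ℕ) (hs : 0 < s) (hr : 0 < r) : aF s r s = r := floor_s hs hr

omit [DecidableEq Fq] [Fintype Fq] in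
lemma x_pos {s r : ℕ} (hs : 0 < s) (hr : 0 < r) {Q x : ℝ} (hQ : 1 < Q)
    (hx : x = (s : ℝ) * Real.log Q / Real.log (1 + 1 / (r : ℝ))) : 0 < x := by
  have h1 : 0 < Real.log Q := Real.log_pos hQ
  have h2 : 0 < Real.log (th r) := Real.log_pos (th_gt_one hr)
  have hsR : (0:ℝ) < (s:ℝ) := by exact_mod_cast hs
  rw [hx]
  show 0 < (s : ℝ) * Real.log Q / Real.log (th r)
  positivity

omit [DecidableEq Fq] [Fintype Fq] in
lemma key_pow {s r : ℕ} (hs : 0 < s) (hr : 0 < r) {Q x : ℝ} (hQ : 1 < Q)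
    (hx : x = (s : ℝ) * Real.log Q / Real.log (1 + 1 / (r : ℝ))) (d : ℕ) :
    Q ^ ((d : ℝ) / x) = yv s r d := by
  have h1 : 0 < Real.log Q := Real.log_pos hQ
  have h2 : 0 < Real.log (th r) := Real.log_pos (th_gt_one hr)
  have hsR : (0:ℝ) < (s:ℝ) := by exact_mod_cast hs
  have hx' : x = (s : ℝ) * Real.log Q / Real.log (th r) := hx
  have hxpos : 0 < x := x_pos hs hr hQ hx
  rw [Real.rpow_def_of_pos (by linarith : (0:ℝ) < Q)]
  rw [show yv s r d = th r ^ ((d:ℝ)/(s:ℝ)) from rfl,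
    Real.rpow_def_of_pos (by linarith [th_gt_one hr] : (0:ℝ) < th r)]
  congr 1
  rw [hx']
  have hxne : Real.log Q ≠ 0 := ne_of_gt h1
  field_simp

omit [DecidableEq Fq] in
lemma finite_bdd (B : ℕ) : {p : Fq[X] | p.natDegree ≤ B}.Finite := by
  classical
  apply Set.Finite.of_finite_image (f := fun p => fun i : Fin (B + 1) => p.coeff i)
  · exact Set.toFinite _
  · intro p hp q hq h
    simp only [Set.mem_setOf_eq] at hp hq
    ext n
    rcases lt_or_ge n (B + 1) with hn | hn
    · exact congrFun h ⟨n, hn⟩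
    · rw [Polynomial.coeff_eq_zero_of_natDegree_lt (by omega),
        Polynomial.coeff_eq_zero_of_natDegree_lt (by omega)]

lemma finite_T (s r : ℕ) (hs : 0 < s) (hr : 0 < r) :
    {p : Fq[X] | p.Monic ∧ Irreducible p ∧ aF s r p.natDegree ≠ 0}.Finite := by
  apply Set.Finite.subset (finite_bdd (⌈(s:ℝ) * Real.log 2 / Real.log (th r)⌉₊))
  rintro p ⟨-, -, ha⟩
  simp only [Set.mem_setOf_eq]
  by_contra hB
  exact ha (floor_eq_zero_of_large hs hr (by omega))

lemma finite_P (s : ℕ) :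
    {p : Fq[X] | p.Monic ∧ Irreducible p ∧ p.natDegree = s}.Finite := by
  apply Set.Finite.subset (finite_bdd s)
  rintro p ⟨-, -, hd⟩
  simp [hd]

/-- The support of `ĥ`. -/
noncomputable def Tfin (s r : ℕ) (hs : 0 < s) (hr : 0 < r) : Finset Fq[X] :=
  (finite_T (Fq := Fq) s r hs hr).toFinset

/-- The monic irreducibles of degree `s`. -/
noncomputable def PSfin (s : ℕ) : Finset Fq[X] := (finite_P (Fq := Fq) s).toFinset

lemma mem_Tfin {s r : ℕ} {hs : 0 < s} {hr : 0 < r} {p : Fq[X]} :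
    p ∈ Tfin (Fq := Fq) s r hs hr ↔ p.Monic ∧ Irreducible p ∧ aF s r p.natDegree ≠ 0 := by
  simp [Tfin]

lemma mem_PSfin {s : ℕ} {p : Fq[X]} :
    p ∈ PSfin (Fq := Fq) s ↔ p.Monic ∧ Irreducible p ∧ p.natDegree = s := by
  simp [PSfin]

lemma PSfin_subset_Tfin {s r : ℕ} (hs : 0 < s) (hr : 0 < r) :
    PSfin (Fq := Fq) s ⊆ Tfin (Fq := Fq) s r hs hr := by
  intro p hp
  rw [mem_PSfin] at hp
  rw [mem_Tfin]
  refine ⟨hp.1, hp.2.1, ?_⟩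
  rw [hp.2.2, aF_s s r hs hr]
  omega

/-- The candidate SSHC polynomial attached to a set `P` of degree-`s` primes. -/
noncomputable def hP (s r : ℕ) (hs : 0 < s) (hr : 0 < r) (P : Finset Fq[X]) : Fq[X] :=
  ∏ p ∈ Tfin (Fq := Fq) s r hs hr, p ^ (aF s r p.natDegree - if p ∈ P then 1 else 0)

/-- `ĥ` itself. -/
noncomputable def Hh (s r : ℕ) (hs : 0 < s) (hr : 0 < r) : Fq[X] :=
  hP (Fq := Fq) s r hs hr ∅

lemma hP_monic (s r : ℕ) (hs : 0 < s) (hr : 0 < r) (P : Finset Fq[X]) :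
    (hP (Fq := Fq) s r hs hr P).Monic :=
  Polynomial.monic_prod_of_monic _ _ (fun p hp => ((mem_Tfin.mp hp).1).pow _)

lemma hP_mult (s r : ℕ) (hs : 0 < s) (hr : 0 < r) {P : Finset Fq[X]}
    (hPsub : P ⊆ PSfin (Fq := Fq) s) {p : Fq[X]} (hp : p.Monic) (hip : Irreducible p) :
    mult p (hP (Fq := Fq) s r hs hr P)
      = aF s r p.natDegree - if p ∈ P then 1 else 0 := by
  rw [hP, mult_prod_pow _ _ (fun q hq => ⟨(mem_Tfin.mp hq).1, (mem_Tfin.mp hq).2.1⟩) hp hip]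
  by_cases hmem : p ∈ Tfin (Fq := Fq) s r hs hr
  · rw [if_pos hmem]
  · rw [if_neg hmem]
    have ha : aF s r p.natDegree = 0 := by
      by_contra h0
      exact hmem (mem_Tfin.mpr ⟨hp, hip, h0⟩)
    have hnP : p ∉ P := fun hmemP => hmem (PSfin_subset_Tfin hs hr (hPsub hmemP))
    rw [ha, if_neg hnP]

lemma Hh_monic (s r : ℕ) (hs : 0 < s) (hr : 0 < r) : (Hh (Fq := Fq) s r hs hr).Monic :=
  hP_monic s r hs hr ∅

lemma Hh_mult (s r : ℕ) (hs : 0 < s) (hr : 0 < r) {p : Fq[X]}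
    (hp : p.Monic) (hip : Irreducible p) :
    mult p (Hh (Fq := Fq) s r hs hr) = aF s r p.natDegree := by
  rw [Hh, hP_mult s r hs hr (Finset.empty_subset _) hp hip]
  simp

variable {s r : ℕ} {x : ℝ}

lemma mult_mul {p f g : Fq[X]} (hp : p.Monic) (hip : Irreducible p)
    (hf : f.Monic) (hg : g.Monic) : mult p (f * g) = mult p f + mult p g := by
  rw [mult_eq_count hp hip (hf.mul hg), mult_eq_count hp hip hf, mult_eq_count hp hip hg,
    normalizedFactors_mul hf.ne_zero hg.ne_zero, Multiset.count_add]

lemma card_gt : 1 < Fintype.card Fq := Fintype.one_lt_card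

lemma F_eq (hs : 0 < s) (hr : 0 < r)
    (hx : x = (s : ℝ) * Real.log (Fintype.card Fq) / Real.log (1 + 1 / (r : ℝ)))
    {f : Fq[X]} (hf : f.Monic) {U : Finset Fq[X]}
    (hU : ∀ p ∈ U, p.Monic ∧ Irreducible p)
    (hsub : (normalizedFactors f).toFinset ⊆ U) :
    (tau f : ℝ) * (Fintype.card Fq : ℝ) ^ (-(f.natDegree : ℝ) / x)
      = ∏ p ∈ U, G (yv s r p.natDegree) (mult p f) := by
  have hQ : (1:ℝ) < (Fintype.card Fq : ℝ) := by exact_mod_cast (card_gt (Fq := Fq))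
  have hQ0 : (0:ℝ) < (Fintype.card Fq : ℝ) := by linarith
  set Q : ℝ := (Fintype.card Fq : ℝ) with hQdef
  set c : ℝ := Q ^ ((1:ℝ)/x) with hcdef
  have hc0 : 0 < c := Real.rpow_pos_of_pos hQ0 _
  have hcn : ∀ n : ℕ, c ^ n = Q ^ ((n:ℝ)/x) := by
    intro n
    rw [hcdef, ← Real.rpow_natCast (Q ^ ((1:ℝ)/x)) n, ← Real.rpow_mul (le_of_lt hQ0)]
    congr 1
    ring
  have hyc : ∀ d : ℕ, yv s r d = c ^ d := by
    intro d
    rw [hcn d, ← key_pow hs hr hQ hx d]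
  -- restrict to the support
  have hstep : ∏ p ∈ U, G (yv s r p.natDegree) (mult p f)
      = ∏ p ∈ (normalizedFactors f).toFinset, G (yv s r p.natDegree) (mult p f) := by
    refine (Finset.prod_subset hsub ?_).symm
    intro p hpU hpS
    have h0 : mult p f = 0 := by
      rw [mult_eq_count (hU p hpU).1 (hU p hpU).2 hf]
      exact Multiset.count_eq_zero_of_notMem (fun hmem => hpS (Multiset.mem_toFinset.mpr hmem))
    rw [h0]
    simp [G]
  rw [hstep]
  -- compute both factors
  have htau : (tau f : ℝ) = ∏ p ∈ (normalizedFactors f).toFinset,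
      ((mult p f : ℝ) + 1) := by
    rw [tau_formula hf]
    push_cast
    refine Finset.prod_congr rfl (fun p hp => ?_)
    rw [mult_eq_count (monic_of_normalized_factor (Multiset.mem_toFinset.mp hp))
      (irreducible_of_normalized_factor p (Multiset.mem_toFinset.mp hp)) hf]
  have hdeg : Q ^ (-(f.natDegree : ℝ) / x) = (∏ p ∈ (normalizedFactors f).toFinset,
      (yv s r p.natDegree) ^ (mult p f))⁻¹ := by
    have h1 : ∏ p ∈ (normalizedFactors f).toFinset, (yv s r p.natDegree) ^ (mult p f)
        = c ^ f.natDegree := by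
      rw [natDegree_formula hf, ← Finset.prod_pow_eq_pow_sum]
      refine Finset.prod_congr rfl (fun p hp => ?_)
      rw [hyc, ← pow_mul, mult_eq_count (monic_of_normalized_factor (Multiset.mem_toFinset.mp hp))
        (irreducible_of_normalized_factor p (Multiset.mem_toFinset.mp hp)) hf, mul_comm]
    rw [h1, hcn, neg_div, Real.rpow_neg (le_of_lt hQ0)]
  rw [htau, hdeg, ← Finset.prod_inv_distrib, ← Finset.prod_mul_distrib]
  refine Finset.prod_congr rfl (fun p hp => ?_)
  rw [G, div_eq_mul_inv]

lemma aF_def (s r d : ℕ) : aF s r d = ⌊1 / (yv s r d - 1)⌋₊ := rfl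

lemma supp_subset_Tfin (hs : 0 < s) (hr : 0 < r) :
    (normalizedFactors (Hh (Fq := Fq) s r hs hr)).toFinset ⊆ Tfin (Fq := Fq) s r hs hr := by
  intro p hp
  rw [Multiset.mem_toFinset] at hp
  have hpm : p.Monic := monic_of_normalized_factor hp
  have hpi : Irreducible p := irreducible_of_normalized_factor p hp
  have hc : 0 < (normalizedFactors (Hh (Fq := Fq) s r hs hr)).count p :=
    Multiset.count_pos.mpr hp
  have hm : mult p (Hh (Fq := Fq) s r hs hr)
      = (normalizedFactors (Hh (Fq := Fq) s r hs hr)).count p :=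
    mult_eq_count hpm hpi (Hh_monic s r hs hr)
  rw [mem_Tfin]
  refine ⟨hpm, hpi, ?_⟩
  rw [← Hh_mult s r hs hr hpm hpi]
  omega

lemma term_eq_iff (hs : 0 < s) (hr : 0 < r) {p : Fq[X]} (hip : Irreducible p) (e : ℕ) :
    G (yv s r p.natDegree) e = G (yv s r p.natDegree) (aF s r p.natDegree)
      ↔ (e = aF s r p.natDegree ∨ (p.natDegree = s ∧ e + 1 = r)) := by
  have hd : 0 < p.natDegree := hip.natDegree_pos
  have hy1 : 1 < yv s r p.natDegree := yv_gt_one hs hr hd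
  rw [aF_def, G_eq_iff hy1]
  constructor
  · rintro (he | ⟨htie, he⟩)
    · exact Or.inl he
    · have hds : p.natDegree = s := by
        by_contra hne
        exact no_tie hs hr hd hne htie
      subst hds
      rw [floor_s hs hr] at he
      exact Or.inr ⟨rfl, he⟩
  · rintro (he | ⟨hds, he⟩)
    · exact Or.inl he
    · rw [hds] at *
      refine Or.inr ⟨?_, by rw [floor_s hs hr]; exact he⟩
      rw [floor_s hs hr]
      exact tie_s hs hr

/-- The multiplicity pattern of an SSHC polynomial. -/
def Cond (s r : ℕ) (f : Fq[X]) : Prop := ∀ p : Fq[X], p.Monic → Irreducible p →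
  (mult p f = aF s r p.natDegree ∨ (p.natDegree = s ∧ mult p f + 1 = r))

lemma F_main (hs : 0 < s) (hr : 0 < r)
    (hx : x = (s : ℝ) * Real.log (Fintype.card Fq) / Real.log (1 + 1 / (r : ℝ)))
    {f : Fq[X]} (hf : f.Monic) :
    ((tau f : ℝ) * (Fintype.card Fq : ℝ) ^ (-(f.natDegree : ℝ) / x)
      ≤ (tau (Hh (Fq := Fq) s r hs hr) : ℝ) * (Fintype.card Fq : ℝ)
          ^ (-((Hh (Fq := Fq) s r hs hr).natDegree : ℝ) / x)) ∧
    ((tau f : ℝ) * (Fintype.card Fq : ℝ) ^ (-(f.natDegree : ℝ) / x)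
      = (tau (Hh (Fq := Fq) s r hs hr) : ℝ) * (Fintype.card Fq : ℝ)
          ^ (-((Hh (Fq := Fq) s r hs hr).natDegree : ℝ) / x) ↔ Cond s r f) := by
  set U : Finset Fq[X] := (normalizedFactors f).toFinset ∪ Tfin (Fq := Fq) s r hs hr with hU
  have hUprop : ∀ p ∈ U, p.Monic ∧ Irreducible p := by
    intro p hp
    rw [hU, Finset.mem_union] at hp
    rcases hp with hp | hp
    · rw [Multiset.mem_toFinset] at hp
      exact ⟨monic_of_normalized_factor hp, irreducible_of_normalized_factor p hp⟩
    · rw [mem_Tfin] at hp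
      exact ⟨hp.1, hp.2.1⟩
  have hsubf : (normalizedFactors f).toFinset ⊆ U := Finset.subset_union_left
  have hsubH : (normalizedFactors (Hh (Fq := Fq) s r hs hr)).toFinset ⊆ U :=
    (supp_subset_Tfin hs hr).trans Finset.subset_union_right
  have hFf := F_eq hs hr hx hf hUprop hsubf
  have hFH := F_eq hs hr hx (Hh_monic s r hs hr) hUprop hsubH
  have hFH' : (tau (Hh (Fq := Fq) s r hs hr) : ℝ) * (Fintype.card Fq : ℝ)
      ^ (-((Hh (Fq := Fq) s r hs hr).natDegree : ℝ) / x)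
      = ∏ p ∈ U, G (yv s r p.natDegree) (aF s r p.natDegree) := by
    rw [hFH]
    exact Finset.prod_congr rfl (fun p hp => by
      rw [Hh_mult s r hs hr (hUprop p hp).1 (hUprop p hp).2])
  have hy1 : ∀ p ∈ U, 1 < yv s r p.natDegree := fun p hp =>
    yv_gt_one hs hr (hUprop p hp).2.natDegree_pos
  have hterm_le : ∀ p ∈ U, G (yv s r p.natDegree) (mult p f)
      ≤ G (yv s r p.natDegree) (aF s r p.natDegree) := by
    intro p hp
    rw [aF_def]
    exact G_le (hy1 p hp) _
  have hterm_pos : ∀ p ∈ U, 0 < G (yv s r p.natDegree) (mult p f) := fun p hp =>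
    G_pos (lt_trans one_pos (hy1 p hp)) _
  have hle : (tau f : ℝ) * (Fintype.card Fq : ℝ) ^ (-(f.natDegree : ℝ) / x)
      ≤ (tau (Hh (Fq := Fq) s r hs hr) : ℝ) * (Fintype.card Fq : ℝ)
          ^ (-((Hh (Fq := Fq) s r hs hr).natDegree : ℝ) / x) := by
    rw [hFf, hFH']
    exact Finset.prod_le_prod (fun p hp => le_of_lt (hterm_pos p hp)) hterm_le
  refine ⟨hle, ?_, ?_⟩
  · -- equality → Cond
    intro heq
    intro p hpm hpi
    by_cases hpU : p ∈ U
    · have hteq : G (yv s r p.natDegree) (mult p f)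
          = G (yv s r p.natDegree) (aF s r p.natDegree) := by
        by_contra hne
        have hstrict : (tau f : ℝ) * (Fintype.card Fq : ℝ) ^ (-(f.natDegree : ℝ) / x)
            < (tau (Hh (Fq := Fq) s r hs hr) : ℝ) * (Fintype.card Fq : ℝ)
                ^ (-((Hh (Fq := Fq) s r hs hr).natDegree : ℝ) / x) := by
          rw [hFf, hFH']
          exact Finset.prod_lt_prod hterm_pos hterm_le
            ⟨p, hpU, lt_of_le_of_ne (hterm_le p hpU) hne⟩
        rw [heq] at hstrict
        exact lt_irrefl _ hstrict
      exact (term_eq_iff hs hr hpi _).mp hteq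
    · left
      have h1 : mult p f = 0 := by
        rw [mult_eq_count hpm hpi hf]
        refine Multiset.count_eq_zero_of_notMem (fun hmem => hpU ?_)
        exact hsubf (Multiset.mem_toFinset.mpr hmem)
      have h2 : aF s r p.natDegree = 0 := by
        by_contra h0
        exact hpU (Finset.subset_union_right (mem_Tfin.mpr ⟨hpm, hpi, h0⟩))
      rw [h1, h2]
  · -- Cond → equality
    intro hcond
    rw [hFf, hFH']
    refine Finset.prod_congr rfl (fun p hp => ?_)
    exact (term_eq_iff hs hr (hUprop p hp).2 _).mpr (hcond p (hUprop p hp).1 (hUprop p hp).2)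

lemma sshc_iff (hs : 0 < s) (hr : 0 < r)
    (hx : x = (s : ℝ) * Real.log (Fintype.card Fq) / Real.log (1 + 1 / (r : ℝ)))
    {h : Fq[X]} : IsSSHC x h ↔ h.Monic ∧ Cond s r h := by
  rw [IsSSHC]
  constructor
  · rintro ⟨hm, hall⟩
    refine ⟨hm, ?_⟩
    exact (F_main hs hr hx hm).2.mp
      (le_antisymm (F_main hs hr hx hm).1 (hall _ (Hh_monic s r hs hr)))
  · rintro ⟨hm, hcond⟩
    refine ⟨hm, fun g hg => ?_⟩
    exact le_of_le_of_eq (F_main hs hr hx hg).1 ((F_main hs hr hx hm).2.mpr hcond).symm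

lemma cond_iff (hs : 0 < s) (hr : 0 < r) {f : Fq[X]} (hf : f.Monic) :
    Cond s r f ↔ ∃ P, P ⊆ PSfin (Fq := Fq) s ∧ f = hP (Fq := Fq) s r hs hr P := by
  constructor
  · intro hcond
    refine ⟨(PSfin (Fq := Fq) s).filter (fun p => mult p f + 1 = r),
      Finset.filter_subset _ _, ?_⟩
    apply monic_ext hf (hP_monic s r hs hr _)
    intro p hpm hpi
    rw [hP_mult s r hs hr (Finset.filter_subset _ _) hpm hpi]
    by_cases hmem : p ∈ (PSfin (Fq := Fq) s).filter (fun p => mult p f + 1 = r)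
    · rw [if_pos hmem]
      obtain ⟨hps, he⟩ := Finset.mem_filter.mp hmem
      have hds : p.natDegree = s := (mem_PSfin.mp hps).2.2
      rw [hds, aF_s s r hs hr]
      omega
    · rw [if_neg hmem]
      rcases hcond p hpm hpi with h | ⟨hds, he⟩
      · omega
      · exact absurd (Finset.mem_filter.mpr ⟨mem_PSfin.mpr ⟨hpm, hpi, hds⟩, he⟩) hmem
  · rintro ⟨P, hPsub, rfl⟩
    intro p hpm hpi
    rw [hP_mult s r hs hr hPsub hpm hpi]
    by_cases hmem : p ∈ P
    · right
      have hds : p.natDegree = s := (mem_PSfin.mp (hPsub hmem)).2.2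
      have haR : aF s r p.natDegree = r := by rw [hds, aF_s s r hs hr]
      rw [if_pos hmem]
      exact ⟨hds, by omega⟩
    · left
      rw [if_neg hmem]
      omega

lemma prod_id_monic {P : Finset Fq[X]} (hT : ∀ p ∈ P, (p : Fq[X]).Monic) :
    (P.prod id).Monic :=
  Polynomial.monic_prod_of_monic _ _ hT

lemma mult_prod_id {P : Finset Fq[X]} (hT : ∀ p ∈ P, (p : Fq[X]).Monic ∧ Irreducible p)
    {p : Fq[X]} (hpm : p.Monic) (hpi : Irreducible p) :
    mult p (P.prod id) = if p ∈ P then 1 else 0 := by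
  have h1 : P.prod id = ∏ q ∈ P, q ^ (1 : ℕ) :=
    Finset.prod_congr rfl (fun q _ => (pow_one q).symm)
  rw [h1, mult_prod_pow P (fun _ => 1) hT hpm hpi]

lemma hP_mul_prod (hs : 0 < s) (hr : 0 < r) {P : Finset Fq[X]}
    (hPsub : P ⊆ PSfin (Fq := Fq) s) :
    hP (Fq := Fq) s r hs hr P * P.prod id = Hh (Fq := Fq) s r hs hr := by
  have hTP : ∀ p ∈ P, (p : Fq[X]).Monic ∧ Irreducible p := fun p hp =>
    ⟨(mem_PSfin.mp (hPsub hp)).1, (mem_PSfin.mp (hPsub hp)).2.1⟩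
  apply monic_ext ((hP_monic s r hs hr P).mul (prod_id_monic (fun p hp => (hTP p hp).1)))
    (Hh_monic s r hs hr)
  intro p hpm hpi
  rw [mult_mul hpm hpi (hP_monic s r hs hr P) (prod_id_monic (fun p hp => (hTP p hp).1)),
    hP_mult s r hs hr hPsub hpm hpi, mult_prod_id hTP hpm hpi,
    Hh_mult s r hs hr hpm hpi]
  by_cases hmem : p ∈ P
  · have hds : p.natDegree = s := (mem_PSfin.mp (hPsub hmem)).2.2
    have haR : aF s r p.natDegree = r := by rw [hds, aF_s s r hs hr]
    simp only [if_pos hmem]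
    omega
  · simp only [if_neg hmem]
    omega

lemma hP_natDegree (hs : 0 < s) (hr : 0 < r) {P : Finset Fq[X]}
    (hPsub : P ⊆ PSfin (Fq := Fq) s) :
    (hP (Fq := Fq) s r hs hr P).natDegree
      = (Hh (Fq := Fq) s r hs hr).natDegree - P.card * s := by
  have hTP : ∀ p ∈ P, (p : Fq[X]).Monic := fun p hp => (mem_PSfin.mp (hPsub hp)).1
  have h1 : (Hh (Fq := Fq) s r hs hr).natDegree
      = (hP (Fq := Fq) s r hs hr P).natDegree + (P.prod id).natDegree := by
    rw [← hP_mul_prod hs hr hPsub,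
      Polynomial.natDegree_mul (hP_monic s r hs hr P).ne_zero (prod_id_monic hTP).ne_zero]
  have h2 : (P.prod id).natDegree = P.card * s := by
    have h3 : (P.prod id).natDegree = ∑ p ∈ P, (id p : Fq[X]).natDegree :=
      Polynomial.natDegree_prod _ _ (fun p hp => ((mem_PSfin.mp (hPsub hp)).2.1).ne_zero)
    rw [h3, Finset.sum_congr rfl (fun p hp =>
      (show (id p : Fq[X]).natDegree = s from (mem_PSfin.mp (hPsub hp)).2.2))]
    rw [Finset.sum_const, smul_eq_mul]
  omega

lemma isHhat_Hh (hs : 0 < s) (hr : 0 < r)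
    (hx : x = (s : ℝ) * Real.log (Fintype.card Fq) / Real.log (1 + 1 / (r : ℝ))) :
    IsHhat x (Hh (Fq := Fq) s r hs hr) := by
  have hQ : (1:ℝ) < (Fintype.card Fq : ℝ) := by exact_mod_cast (card_gt (Fq := Fq))
  refine ⟨Hh_monic s r hs hr, fun p hpm hpi => ?_⟩
  rw [show mult p (Hh (Fq := Fq) s r hs hr)
      = SSHCAux.aF s r p.natDegree from Hh_mult s r hs hr hpm hpi]
  rw [key_pow hs hr hQ hx p.natDegree]
  rfl

lemma isHhat_unique (hs : 0 < s) (hr : 0 < r)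
    (hx : x = (s : ℝ) * Real.log (Fintype.card Fq) / Real.log (1 + 1 / (r : ℝ)))
    {H : Fq[X]} (hH : IsHhat x H) : H = Hh (Fq := Fq) s r hs hr := by
  have hQ : (1:ℝ) < (Fintype.card Fq : ℝ) := by exact_mod_cast (card_gt (Fq := Fq))
  rw [IsHhat] at hH
  apply monic_ext hH.1 (Hh_monic s r hs hr)
  intro p hpm hpi
  rw [hH.2 p hpm hpi, Hh_mult s r hs hr hpm hpi, key_pow hs hr hQ hx p.natDegree]
  rfl

lemma hP_injOn (hs : 0 < s) (hr : 0 < r) {P P' : Finset Fq[X]}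
    (h1 : P ⊆ PSfin (Fq := Fq) s) (h2 : P' ⊆ PSfin (Fq := Fq) s)
    (heq : hP (Fq := Fq) s r hs hr P = hP (Fq := Fq) s r hs hr P') : P = P' := by
  ext p
  by_cases hps : p ∈ PSfin (Fq := Fq) s
  · obtain ⟨hpm, hpi, hds⟩ := mem_PSfin.mp hps
    have e1 := hP_mult s r hs hr h1 hpm hpi
    have e2 := hP_mult s r hs hr h2 hpm hpi
    rw [heq] at e1
    have hcomb := e1.symm.trans e2
    have haR : aF s r p.natDegree = r := by rw [hds, aF_s s r hs hr]
    by_cases hm1 : p ∈ P <;> by_cases hm2 : p ∈ P' <;>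
      simp only [hm1, hm2, if_pos, if_neg, not_false_iff, haR] at hcomb ⊢ <;>
      first
        | rfl
        | (exfalso; omega)
        | (simp [hm1, hm2])
  · constructor
    · intro hmem; exact absurd (h1 hmem) hps
    · intro hmem; exact absurd (h2 hmem) hps

end Global


end SSHCAux

/-- For `x = s log q / log(1 + 1/r) ∈ S`, the `x`-SSHC polynomials are exactly the
polynomials `ĥ(x)/(P_{i_1} ⋯ P_{i_v})` with the `P_{i_j}` distinct monic irreducibles of
degree `s`; such a polynomial has degree `deg ĥ(x) - v s`, and there are exactly
`2^{π(s)}` of them. -/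
theorem sshc_classification_of_mem_S {Fq : Type} [Field Fq] [Fintype Fq]
    (s r : ℕ) (hs : 0 < s) (hr : 0 < r) (x : ℝ)
    (hx : x = (s : ℝ) * Real.log (Fintype.card Fq) / Real.log (1 + 1 / (r : ℝ))) :
    (∀ h : Fq[X], IsSSHC x h ↔
      ∃ (P : Finset Fq[X]) (H : Fq[X]), IsHhat x H ∧
        (∀ p ∈ P, p.Monic ∧ Irreducible p ∧ p.natDegree = s) ∧
        h * (P.prod id) = H ∧ h.natDegree = H.natDegree - P.card * s) ∧
    {h : Fq[X] | IsSSHC x h}.ncard =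
      2 ^ {p : Fq[X] | p.Monic ∧ Irreducible p ∧ p.natDegree = s}.ncard := by
  classical
  have hiff : ∀ h : Fq[X], IsSSHC x h ↔
      ∃ P, P ⊆ SSHCAux.PSfin (Fq := Fq) s ∧ h = SSHCAux.hP (Fq := Fq) s r hs hr P := by
    intro h
    rw [SSHCAux.sshc_iff hs hr hx]
    constructor
    · rintro ⟨hm, hcond⟩
      exact (SSHCAux.cond_iff hs hr hm).mp hcond
    · rintro ⟨P, hPsub, rfl⟩
      exact ⟨SSHCAux.hP_monic s r hs hr P,
        (SSHCAux.cond_iff hs hr (SSHCAux.hP_monic s r hs hr P)).mpr ⟨P, hPsub, rfl⟩⟩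
  constructor
  · intro h
    rw [hiff h]
    constructor
    · rintro ⟨P, hPsub, rfl⟩
      exact ⟨P, SSHCAux.Hh (Fq := Fq) s r hs hr, SSHCAux.isHhat_Hh hs hr hx,
        fun p hp => SSHCAux.mem_PSfin.mp (hPsub hp), SSHCAux.hP_mul_prod hs hr hPsub,
        SSHCAux.hP_natDegree hs hr hPsub⟩
    · rintro ⟨P, H, hH, hPmem, hmul, hdeg⟩
      have hPsub : P ⊆ SSHCAux.PSfin (Fq := Fq) s := fun p hp =>
        SSHCAux.mem_PSfin.mpr (hPmem p hp)
      have hHeq : H = SSHCAux.Hh (Fq := Fq) s r hs hr :=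
        SSHCAux.isHhat_unique hs hr hx hH
      have hne : (P.prod id) ≠ 0 :=
        (SSHCAux.prod_id_monic (fun p hp => (hPmem p hp).1)).ne_zero
      refine ⟨P, hPsub, ?_⟩
      apply mul_right_cancel₀ hne
      rw [SSHCAux.hP_mul_prod hs hr hPsub, hmul, hHeq]
  · have hEq : {h : Fq[X] | IsSSHC x h}
        = (fun P => SSHCAux.hP (Fq := Fq) s r hs hr P) ''
            ↑(SSHCAux.PSfin (Fq := Fq) s).powerset := by
      ext h
      simp only [Set.mem_setOf_eq, Set.mem_image, Finset.mem_coe, Finset.mem_powerset]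
      rw [hiff h]
      constructor
      · rintro ⟨P, hPsub, rfl⟩
        exact ⟨P, hPsub, rfl⟩
      · rintro ⟨P, hPmem, rfl⟩
        exact ⟨P, hPmem, rfl⟩
    have hinj : Set.InjOn (fun P => SSHCAux.hP (Fq := Fq) s r hs hr P)
        ↑(SSHCAux.PSfin (Fq := Fq) s).powerset := by
      intro P h1 P' h2 heq
      rw [Finset.mem_coe, Finset.mem_powerset] at h1 h2
      exact SSHCAux.hP_injOn hs hr h1 h2 heq
    rw [hEq, Set.ncard_image_of_injOn hinj, Set.ncard_coe_finset, Finset.card_powerset]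
    congr 1
    rw [Set.ncard_eq_toFinset_card _ (SSHCAux.finite_P (Fq := Fq) s)]
    rfl
end
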